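/- arXiv:2211.11429 — 4 statements merged into one kernel-verified Lean document; each statement's English description precedes it below -/
import Mathlib

section
/- Let G be a compact group acting linearly and continuously on a Banach space E (with each g acting by a bounded operator, the action map G × E → E continuous). Then for every n ≥ 0, the coboundary map δⁿ from continuous n-cochains Cⁿ(G,E) to continuous (n+1)-cocycles Z^{n+1}(G,E) is surjective: every continuous (n+1)-cocycle is the coboundary of a continuous n-cochain. -/
open MeasureTheory Filter Set

/-- The inhomogeneous group-cohomology coboundary operator on (not necessarily
continuous) `n`-cochains `Gⁿ → E`. -/
def groupCoboundary {G E : Type*} [Group G] [AddCommGroup E] [DistribMulAction G E]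
    (n : ℕ) (f : (Fin n → G) → E) : (Fin (n + 1) → G) → E :=
  fun g =>
    g 0 • f (fun i => g i.succ)
      + (Finset.range n).sum (fun i =>
          (-1 : ℤ) ^ (i + 1) • f (fun j =>
            if (j : ℕ) < i then g (Fin.castSucc j)
            else if (j : ℕ) = i then g (Fin.castSucc j) * g j.succ
            else g j.succ))
      + (-1 : ℤ) ^ (n + 1) • f (fun j => g (Fin.castSucc j))

private lemma contIntegrable {G : Type*} [TopologicalSpace G] [CompactSpace G]
    [MeasurableSpace G] [OpensMeasurableSpace G]
    {E : Type*} [NormedAddCommGroup E]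
    (μ : Measure G) [IsFiniteMeasure μ]
    {f : G → E} (hf : Continuous f) : Integrable f μ := by
  borelize E
  have hsm : StronglyMeasurable f :=
    stronglyMeasurable_iff_measurable_separable.2
      ⟨hf.measurable, (isCompact_range hf).isSeparable⟩
  obtain ⟨R, hR⟩ := (isCompact_range hf).isBounded.exists_norm_le
  exact (integrable_const R).mono' hsm.aestronglyMeasurable
    (Eventually.of_forall fun s => hR _ (mem_range_self s))

private lemma contParam {X G : Type*} [TopologicalSpace X] [TopologicalSpace G] [CompactSpace G]
    [MeasurableSpace G] [OpensMeasurableSpace G]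
    {E : Type*} [NormedAddCommGroup E] [NormedSpace ℝ E]
    (μ : Measure G) [IsProbabilityMeasure μ]
    {F : X × G → E} (hF : Continuous F) :
    Continuous fun x => ∫ s, F (x, s) ∂μ := by
  rw [continuous_iff_continuousAt]
  intro x₀
  rw [ContinuousAt, Metric.tendsto_nhds]
  intro ε hε
  have hVopen : IsOpen {p : X × G | ‖F p - F (x₀, p.2)‖ < ε / 2} :=
    isOpen_lt ((hF.sub (hF.comp (continuous_const.prodMk continuous_snd))).norm)
      continuous_const
  have hsub : ({x₀} : Set X) ×ˢ (univ : Set G) ⊆ {p : X × G | ‖F p - F (x₀, p.2)‖ < ε / 2} := by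
    rintro ⟨x, s⟩ ⟨hx, -⟩
    rcases hx with rfl
    simp [half_pos hε]
  obtain ⟨u, v, hu, _hv, hx₀u, hvuniv, huv⟩ :=
    generalized_tube_lemma isCompact_singleton isCompact_univ hVopen hsub
  filter_upwards [hu.mem_nhds (hx₀u rfl)] with x hx
  have hintx : Integrable (fun s => F (x, s)) μ :=
    contIntegrable μ (hF.comp (continuous_const.prodMk continuous_id))
  have hintx₀ : Integrable (fun s => F (x₀, s)) μ :=
    contIntegrable μ (hF.comp (continuous_const.prodMk continuous_id))
  have hbound : ∀ s : G, ‖F (x, s) - F (x₀, s)‖ ≤ ε / 2 := fun s =>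
    le_of_lt (huv (Set.mk_mem_prod hx (hvuniv (mem_univ s))))
  have : dist (∫ s, F (x, s) ∂μ) (∫ s, F (x₀, s) ∂μ) ≤ ε / 2 := by
    rw [dist_eq_norm, ← integral_sub hintx hintx₀]
    calc ‖∫ s, (F (x, s) - F (x₀, s)) ∂μ‖ ≤ (ε / 2) * (μ univ).toReal :=
          norm_integral_le_of_norm_le_const (Eventually.of_forall hbound)
      _ = ε / 2 := by simp
  linarith

/-- For a compact group `G` acting linearly and continuously on a Banach
space `E`, every continuous `(n+1)`-cocycle is the coboundary of a continuous
`n`-cochain. -/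
theorem coboundary_surjective_onto_cocycles
    {G : Type*} [Group G] [TopologicalSpace G] [IsTopologicalGroup G] [CompactSpace G]
    {E : Type*} [NormedAddCommGroup E] [NormedSpace ℝ E] [CompleteSpace E]
    [DistribMulAction G E] [SMulCommClass G ℝ E]
    (hact : Continuous fun p : G × E => p.1 • p.2)
    (n : ℕ) (a : (Fin (n + 1) → G) → E) (ha : Continuous a)
    (hcoc : groupCoboundary (n + 1) a = 0) :
    ∃ b : (Fin n → G) → E, Continuous b ∧ groupCoboundary n b = a := by
  classical
  borelize G
  -- set up the normalized Haar probability measure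
  have hc0 : (Measure.haar : Measure G) univ ≠ 0 :=
    (isOpen_univ.measure_pos Measure.haar univ_nonempty).ne'
  have hcT : (Measure.haar : Measure G) univ ≠ ⊤ := (isCompact_univ.measure_lt_top).ne
  set μ : Measure G := ((Measure.haar : Measure G) univ)⁻¹ • Measure.haar with hμdef
  haveI : Measure.IsHaarMeasure μ :=
    Measure.IsHaarMeasure.smul _ (ENNReal.inv_ne_zero.2 hcT) (ENNReal.inv_ne_top.2 hc0)
  haveI : IsProbabilityMeasure μ :=
    ⟨by rw [hμdef, Measure.smul_apply, smul_eq_mul, ENNReal.inv_mul_cancel hc0 hcT]⟩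
  haveI : μ.IsMulRightInvariant := by
    constructor
    intro g
    haveI : IsProbabilityMeasure (μ.map (· * g)) :=
      Measure.isProbabilityMeasure_map (measurable_mul_const g).aemeasurable
    exact Measure.isHaarMeasure_eq_of_isProbabilityMeasure (μ.map (· * g)) μ
  -- the averaged cochain
  have hconsC : Continuous fun p : (Fin n → G) × G => (Fin.cons p.2 p.1 : Fin (n + 1) → G) := by
    refine continuous_pi fun j => ?_
    refine Fin.cases ?_ (fun i => ?_) j
    · simpa using continuous_snd
    · simp only [Fin.cons_succ]; exact (continuous_apply i).comp continuous_fst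
  have hFC : Continuous fun p : (Fin n → G) × G => p.2⁻¹ • a (Fin.cons p.2 p.1) :=
    hact.comp ((continuous_snd.inv).prodMk (ha.comp hconsC))
  set b : (Fin n → G) → E := fun v => ∫ s, s⁻¹ • a (Fin.cons s v) ∂μ with hbdef
  have hint : ∀ v : Fin n → G, Integrable (fun s => s⁻¹ • a (Fin.cons s v)) μ := fun v =>
    contIntegrable μ (hFC.comp (continuous_const.prodMk continuous_id))
  refine ⟨b, contParam μ hFC, ?_⟩
  funext g
  -- notation for the three kinds of arguments
  set v₁ : Fin n → G := fun i => g i.succ with hv₁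
  set v₃ : Fin n → G := fun j => g j.castSucc with hv₃
  set m : ℕ → Fin n → G := fun k => fun i =>
    if (i : ℕ) < k then g i.castSucc
    else if (i : ℕ) = k then g i.castSucc * g i.succ
    else g i.succ with hm
  -- commuting the G-action with ℤ-smul
  have hzc : ∀ (t : G) (z : ℤ) (x : E), t • (z • x) = z • (t • x) := fun t z x =>
    (DistribMulAction.toAddMonoidHom E t).map_zsmul z x
  -- commuting the G-action with the integral
  have hG : ∀ (g₀ : G) (f : G → E), Integrable f μ →
      g₀ • ∫ s, f s ∂μ = ∫ s, g₀ • f s ∂μ := by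
    intro g₀ f hf
    let L : E →L[ℝ] E :=
      ⟨⟨⟨fun x => g₀ • x, smul_add g₀⟩, fun r x => smul_comm g₀ r x⟩,
        hact.comp (continuous_const.prodMk continuous_id)⟩
    exact (L.integral_comp_comm hf).symm
  -- ℤ-smul to ℝ-smul
  have hzr : ∀ (z : ℤ) (x : E), z • x = (z : ℝ) • x := fun z x =>
    (Int.cast_smul_eq_zsmul ℝ z x).symm
  -- the pointwise identity coming from the cocycle condition
  have key2 : ∀ s : G, a g =
      s⁻¹ • a (Fin.cons (s * g 0) v₁)
        + (Finset.range n).sum (fun k => (-1 : ℤ) ^ (k + 1) • (s⁻¹ • a (Fin.cons s (m k))))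
        + (-1 : ℤ) ^ (n + 1) • (s⁻¹ • a (Fin.cons s v₃)) := by
    intro s
    have h0 := congrFun hcoc (Fin.cons s g)
    simp only [groupCoboundary, Pi.zero_apply, Fin.cons_zero, Fin.cons_succ] at h0
    rw [Finset.sum_range_succ'] at h0
    have e0 : ((fun j =>
        if (j : ℕ) < 0 then (Fin.cons s g : Fin (n + 2) → G) j.castSucc
        else if (j : ℕ) = 0 then (Fin.cons s g : Fin (n + 2) → G) j.castSucc * g j else g j) : Fin (n + 1) → G)
        = (Fin.cons (s * g 0) v₁ : Fin (n + 1) → G) := by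
      funext j
      refine Fin.cases ?_ (fun i => ?_) j
      · simp
      · simp [hv₁]
    have e2 : ∀ k : ℕ, ((fun j =>
        if (j : ℕ) < k + 1 then (Fin.cons s g : Fin (n + 2) → G) j.castSucc
        else if (j : ℕ) = k + 1 then (Fin.cons s g : Fin (n + 2) → G) j.castSucc * g j else g j) : Fin (n + 1) → G)
        = (Fin.cons s (m k) : Fin (n + 1) → G) := by
      intro k
      funext j
      refine Fin.cases ?_ (fun i => ?_) j
      · simp
      · simp [hm, ← Fin.succ_castSucc, Nat.succ_lt_succ_iff]
    have e3 : ((fun j => (Fin.cons s g : Fin (n + 2) → G) j.castSucc) : Fin (n + 1) → G) = (Fin.cons s v₃ : Fin (n + 1) → G) := by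
      funext j
      refine Fin.cases ?_ (fun i => ?_) j
      · simp
      · simp [hv₃, ← Fin.succ_castSucc]
    rw [e0, e3] at h0
    simp only [e2] at h0
    have hsign : ∀ (x : E) (k : ℕ), (-1 : ℤ) ^ (k + 1) • x = -((-1 : ℤ) ^ k • x) := by
      intro x k
      rw [pow_succ, mul_smul, neg_one_smul, smul_neg]
    simp only [hsign, neg_neg, pow_zero, one_smul, Finset.sum_neg_distrib] at h0 ⊢
    have hsa : s • a g
        = a (Fin.cons (s * g 0) v₁)
          + -((Finset.range n).sum fun k => (-1 : ℤ) ^ k • a (Fin.cons s (m k)))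
          + -((-1 : ℤ) ^ n • a (Fin.cons s v₃)) := by
      have h1 : s • a g - (a (Fin.cons (s * g 0) v₁)
          + -((Finset.range n).sum fun k => (-1 : ℤ) ^ k • a (Fin.cons s (m k)))
          + -((-1 : ℤ) ^ n • a (Fin.cons s v₃))) = 0 := by
        rw [← h0]; abel
      exact sub_eq_zero.mp h1
    rw [← inv_smul_smul s (a g), hsa, smul_add, smul_add, smul_neg, smul_neg, Finset.smul_sum]
    simp only [hzc]
  -- now compute the coboundary of b
  have hintA1 : Integrable (fun s => s⁻¹ • a (Fin.cons (s * g 0) v₁)) μ := by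
    refine contIntegrable μ ?_
    exact hact.comp (continuous_inv.prodMk (ha.comp (hconsC.comp
      (continuous_const.prodMk (continuous_id.mul continuous_const)))))
  have hT1 : g 0 • b v₁ = ∫ s, s⁻¹ • a (Fin.cons (s * g 0) v₁) ∂μ := by
    rw [hbdef]
    simp only []
    rw [hG _ _ (hint v₁)]
    rw [← integral_mul_right_eq_self (μ := μ)
      (fun t => t⁻¹ • a (Fin.cons (t * g 0) v₁)) (g 0)⁻¹]
    simp only [mul_inv_rev, inv_inv, inv_mul_cancel_right, mul_smul]
  have hT2 : ∀ k, (-1 : ℤ) ^ (k + 1) • b (m k)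
      = ∫ s, (-1 : ℤ) ^ (k + 1) • (s⁻¹ • a (Fin.cons s (m k))) ∂μ := by
    intro k
    simp only [hzr, Int.cast_pow, Int.cast_neg, Int.cast_one]
    rw [integral_smul]
  have hT3 : (-1 : ℤ) ^ (n + 1) • b v₃
      = ∫ s, (-1 : ℤ) ^ (n + 1) • (s⁻¹ • a (Fin.cons s v₃)) ∂μ := by
    simp only [hzr, Int.cast_pow, Int.cast_neg, Int.cast_one]
    rw [integral_smul]
  have hintk : ∀ k, Integrable (fun s => (-1 : ℤ) ^ (k + 1) • (s⁻¹ • a (Fin.cons s (m k)))) μ := by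
    intro k
    simp only [hzr, Int.cast_pow, Int.cast_neg, Int.cast_one]
    exact (hint (m k)).smul ((-1 : ℝ) ^ (k + 1))
  have hint3 : Integrable (fun s => (-1 : ℤ) ^ (n + 1) • (s⁻¹ • a (Fin.cons s v₃))) μ := by
    simp only [hzr, Int.cast_pow, Int.cast_neg, Int.cast_one]
    exact (hint v₃).smul ((-1 : ℝ) ^ (n + 1))
  show g 0 • b v₁
      + (Finset.range n).sum (fun k => (-1 : ℤ) ^ (k + 1) • b (m k))
      + (-1 : ℤ) ^ (n + 1) • b v₃ = a g
  have hintS : Integrable (fun s =>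
      (Finset.range n).sum fun k => (-1 : ℤ) ^ (k + 1) • (s⁻¹ • a (Fin.cons s (m k)))) μ :=
    integrable_finset_sum _ (fun k _ => hintk k)
  have e1 : ((Finset.range n).sum fun k => ∫ s, (-1 : ℤ) ^ (k + 1) • (s⁻¹ • a (Fin.cons s (m k))) ∂μ)
      = ∫ s, ((Finset.range n).sum fun k => (-1 : ℤ) ^ (k + 1) • (s⁻¹ • a (Fin.cons s (m k)))) ∂μ :=
    (integral_finset_sum _ (fun k _ => hintk k)).symm
  have e2 : (∫ s, s⁻¹ • a (Fin.cons (s * g 0) v₁) ∂μ)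
        + (∫ s, ((Finset.range n).sum fun k => (-1 : ℤ) ^ (k + 1) • (s⁻¹ • a (Fin.cons s (m k)))) ∂μ)
        + (∫ s, (-1 : ℤ) ^ (n + 1) • (s⁻¹ • a (Fin.cons s v₃)) ∂μ)
      = ∫ s, (s⁻¹ • a (Fin.cons (s * g 0) v₁)
          + ((Finset.range n).sum fun k => (-1 : ℤ) ^ (k + 1) • (s⁻¹ • a (Fin.cons s (m k))))
          + (-1 : ℤ) ^ (n + 1) • (s⁻¹ • a (Fin.cons s v₃))) ∂μ := by
    have hint12 : Integrable (fun s => s⁻¹ • a (Fin.cons (s * g 0) v₁)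
        + ((Finset.range n).sum fun k => (-1 : ℤ) ^ (k + 1) • (s⁻¹ • a (Fin.cons s (m k))))) μ :=
      hintA1.add hintS
    rw [integral_add hint12 hint3, integral_add hintA1 hintS]
  have final : ∫ s, (s⁻¹ • a (Fin.cons (s * g 0) v₁)
          + ((Finset.range n).sum fun k => (-1 : ℤ) ^ (k + 1) • (s⁻¹ • a (Fin.cons s (m k))))
          + (-1 : ℤ) ^ (n + 1) • (s⁻¹ • a (Fin.cons s v₃))) ∂μ = a g := by
    calc ∫ s, (s⁻¹ • a (Fin.cons (s * g 0) v₁)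
          + ((Finset.range n).sum fun k => (-1 : ℤ) ^ (k + 1) • (s⁻¹ • a (Fin.cons s (m k))))
          + (-1 : ℤ) ^ (n + 1) • (s⁻¹ • a (Fin.cons s v₃))) ∂μ
        = ∫ _s, a g ∂μ := integral_congr_ae (Eventually.of_forall fun s => (key2 s).symm)
      _ = a g := by simp
  rw [hT1, hT3, Finset.sum_congr rfl (fun k _ => hT2 k), e1, e2, final]
end

section
/- Let G be a compact group acting continuously on a Banach space E by bounded linear maps. Then every continuous group cohomology group Hⁿ(G,E) vanishes for n ≥ 1. -/
open MeasureTheory Fin Function Set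

section FinLemmas

variable {G : Type*} {m : ℕ}

theorem aux_snoc_succ_eq (g : Fin (m + 1) → G) (x : G) :
    (fun i : Fin (m + 1) => (Fin.snoc g x : Fin (m+2) → G) i.succ)
      = (Fin.snoc (fun i : Fin m => g i.succ) x : Fin (m + 1) → G) := by
  funext j
  refine Fin.lastCases ?_ (fun k => ?_) j
  · simp [Fin.succ_last]
  · rw [Fin.succ_castSucc, Fin.snoc_castSucc, Fin.snoc_castSucc]

theorem aux_merge_snoc_lt [Mul G] (g : Fin (m + 1) → G) (x : G) (i : ℕ) (hi : i < m) :
    (fun j : Fin (m + 1) =>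
        if (j : ℕ) < i then (Fin.snoc g x : Fin (m+2) → G) (Fin.castSucc j)
        else if (j : ℕ) = i then
          (Fin.snoc g x : Fin (m+2) → G) (Fin.castSucc j) * (Fin.snoc g x : Fin (m+2) → G) j.succ
        else (Fin.snoc g x : Fin (m+2) → G) j.succ)
      = (Fin.snoc (fun j : Fin m =>
          if (j : ℕ) < i then g (Fin.castSucc j)
          else if (j : ℕ) = i then g (Fin.castSucc j) * g j.succ
          else g j.succ) x : Fin (m + 1) → G) := by
  funext j
  refine Fin.lastCases ?_ (fun k => ?_) j
  · have h1 : ¬ ((Fin.last m : ℕ) < i) := by simp; omega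
    have h2 : ¬ ((Fin.last m : ℕ) = i) := by simp; omega
    simp only [h1, h2, if_false]
    rw [Fin.succ_last, Fin.snoc_last, Fin.snoc_last]
  · rw [Fin.snoc_castSucc]
    simp only [Fin.coe_castSucc]
    by_cases h : (k : ℕ) < i
    · simp only [h, if_true, Fin.snoc_castSucc]
    · by_cases h2 : (k : ℕ) = i
      · simp only [h, h2, if_false, if_true, Fin.snoc_castSucc,
          Fin.succ_castSucc]
      · simp only [h, h2, if_false, Fin.succ_castSucc, Fin.snoc_castSucc]

theorem aux_merge_snoc_last [Mul G] (g : Fin (m + 1) → G) (x : G) :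
    (fun j : Fin (m + 1) =>
        if (j : ℕ) < m then (Fin.snoc g x : Fin (m+2) → G) (Fin.castSucc j)
        else if (j : ℕ) = m then
          (Fin.snoc g x : Fin (m+2) → G) (Fin.castSucc j) * (Fin.snoc g x : Fin (m+2) → G) j.succ
        else (Fin.snoc g x : Fin (m+2) → G) j.succ)
      = (Fin.snoc (fun j : Fin m => g (Fin.castSucc j)) (g (Fin.last m) * x) : Fin (m + 1) → G) := by
  funext j
  refine Fin.lastCases ?_ (fun k => ?_) j
  · simp [Fin.succ_last]
  · have h : (k : ℕ) < m := k.isLt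
    simp only [Fin.coe_castSucc, h, if_true, Fin.snoc_castSucc]

end FinLemmas

theorem aux_coboundary_snoc {G E : Type*} [Group G] [AddCommGroup E] [DistribMulAction G E] (m : ℕ)
    (a : (Fin (m+1) → G) → E) (g : Fin (m+1) → G) (x : G) :
    groupCoboundary (m+1) a (Fin.snoc g x)
      = g 0 • a (Fin.snoc (fun i : Fin m => g i.succ) x)
        + ((Finset.range m).sum (fun i => (-1:ℤ)^(i+1) • a (Fin.snoc (fun j : Fin m =>
              if (j:ℕ) < i then g j.castSucc else if (j:ℕ) = i then g j.castSucc * g j.succ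
              else g j.succ) x))
          + (-1:ℤ)^(m+1) • a (Fin.snoc (fun j : Fin m => g j.castSucc) (g (Fin.last m) * x)))
        + (-1:ℤ)^(m+2) • a g := by
  unfold groupCoboundary
  rw [Finset.sum_range_succ]
  have h0 : (Fin.snoc g x : Fin (m+2) → G) 0 = g 0 := by
    simpa using Fin.snoc_castSucc (α := fun _ : Fin (m+2) => G) (p := g) (x := x) (i := 0)
  congr 1
  congr 1
  · rw [h0, aux_snoc_succ_eq]
  · congr 1
    · refine Finset.sum_congr rfl fun i hi => ?_
      rw [aux_merge_snoc_lt g x i (Finset.mem_range.mp hi)]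
    · rw [aux_merge_snoc_last g x]
  · have hcs : (fun j : Fin (m+1) => (Fin.snoc g x : Fin (m+2) → G) j.castSucc) = g :=
      funext fun j => Fin.snoc_castSucc (α := fun _ : Fin (m+2) => G) (p := g) (x := x) (i := j)
    rw [hcs]

/-- For a compact group `G` acting continuously by bounded linear maps on
a Banach space `E`, the continuous group cohomology `Hⁿ(G, E)` vanishes for all
`n = m + 1 ≥ 1`: every continuous `n`-cocycle is the coboundary of a continuous
`(n-1)`-cochain. -/
theorem continuous_group_cohomology_vanishes
    {G : Type*} [Group G] [TopologicalSpace G] [IsTopologicalGroup G] [CompactSpace G]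
    {E : Type*} [NormedAddCommGroup E] [NormedSpace ℝ E] [CompleteSpace E]
    [DistribMulAction G E] [SMulCommClass G ℝ E]
    (hact : Continuous fun p : G × E => p.1 • p.2)
    (m : ℕ) (a : (Fin (m + 1) → G) → E) (ha : Continuous a)
    (hcoc : groupCoboundary (m + 1) a = 0) :
    ∃ b : (Fin m → G) → E, Continuous b ∧ groupCoboundary m b = a := by
  classical
  haveI : Nonempty G := ⟨1⟩
  borelize G
  set μ : Measure G := Measure.haarMeasure ⊤ with hμdef
  haveI hprob : IsProbabilityMeasure μ := ⟨by
    rw [hμdef, ← TopologicalSpace.PositiveCompacts.coe_top (α := G)]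
    exact Measure.haarMeasure_self⟩
  -- continuity of the snoc map in both variables
  have cont_snoc2 : Continuous fun p : (Fin m → G) × G => (Fin.snoc p.1 p.2 : Fin (m+1) → G) := by
    apply continuous_pi
    intro j
    refine Fin.lastCases ?_ (fun k => ?_) j
    · simp only [Fin.snoc_last]
      exact continuous_snd
    · simp only [Fin.snoc_castSucc]
      exact (continuous_apply k).comp continuous_fst
  have cont_snoc : ∀ u : Fin m → G, Continuous fun x : G => a (Fin.snoc u x) := fun u =>
    ha.comp (cont_snoc2.comp (Continuous.prodMk_right u))
  -- every continuous function is integrable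
  have hintc : ∀ f : G → E, Continuous f → Integrable f μ := fun f hf =>
    hf.integrable_of_hasCompactSupport ((isClosed_tsupport _).isCompact)
  have hint : ∀ u : Fin m → G, Integrable (fun x => a (Fin.snoc u x)) μ := fun u =>
    hintc _ (cont_snoc u)
  -- the averaged cochain
  set I : (Fin m → G) → E := fun u => ∫ x, a (Fin.snoc u x) ∂μ with hIdef
  -- group smul commutes with the integral
  have hGsmul : ∀ (g₀ : G) (f : G → E), Integrable f μ →
      (∫ x, g₀ • f x ∂μ) = g₀ • ∫ x, f x ∂μ := by
    intro g₀ f hf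
    let L : E →L[ℝ] E :=
      ⟨{ toFun := fun v => g₀ • v
         map_add' := smul_add g₀
         map_smul' := fun r v => smul_comm g₀ r v },
       hact.comp (Continuous.prodMk_right g₀)⟩
    exact ContinuousLinearMap.integral_comp_comm L hf
  -- integer smul commutes with the integral
  have hzsmul : ∀ (c : ℤ) (f : G → E), (∫ x, c • f x ∂μ) = c • ∫ x, f x ∂μ := by
    intro c f
    simp_rw [← Int.cast_smul_eq_zsmul ℝ c]
    exact integral_smul (c : ℝ) f
  -- continuity of I
  have contI : Continuous I := by
    rw [continuous_iff_continuousAt]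
    intro u₀
    rw [ContinuousAt, Metric.tendsto_nhds]
    intro ε hε
    have hW : IsOpen {p : (Fin m → G) × G |
        ‖a (Fin.snoc p.1 p.2) - a (Fin.snoc u₀ p.2)‖ < ε/2} := by
      apply isOpen_lt _ continuous_const
      apply Continuous.norm
      exact ((ha.comp cont_snoc2).sub
        (ha.comp (cont_snoc2.comp ((continuous_const (y := u₀)).prodMk continuous_snd))))
    have hsub : ({u₀} : Set (Fin m → G)) ×ˢ (Set.univ : Set G) ⊆
        {p : (Fin m → G) × G | ‖a (Fin.snoc p.1 p.2) - a (Fin.snoc u₀ p.2)‖ < ε/2} := by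
      rintro ⟨u, x⟩ ⟨hu, -⟩
      rcases hu with rfl
      simpa using by positivity
    obtain ⟨U, V, hUopen, -, hU₀, hV, hUV⟩ :=
      generalized_tube_lemma isCompact_singleton isCompact_univ hW hsub
    filter_upwards [hUopen.mem_nhds (hU₀ rfl)] with u hu
    rw [dist_eq_norm]
    have hIdiff : I u - I u₀ = ∫ x, (a (Fin.snoc u x) - a (Fin.snoc u₀ x)) ∂μ :=
      (integral_sub (hint u) (hint u₀)).symm
    have hle : ‖I u - I u₀‖ ≤ ε/2 := by
      rw [hIdiff]
      calc ‖∫ x, (a (Fin.snoc u x) - a (Fin.snoc u₀ x)) ∂μ‖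
          ≤ ∫ _x, (ε/2) ∂μ := by
            apply norm_integral_le_of_norm_le (integrable_const (ε/2))
            filter_upwards with x
            exact le_of_lt (hUV (Set.mk_mem_prod hu (hV (Set.mem_univ x))))
        _ = ε/2 := by simp
    linarith
  -- the integrated cocycle identity
  have key2 : ∀ g : Fin (m+1) → G,
      g 0 • I (fun i => g i.succ)
        + ((Finset.range m).sum (fun i => (-1:ℤ)^(i+1) • I (fun j : Fin m =>
              if (j:ℕ) < i then g j.castSucc else if (j:ℕ) = i then g j.castSucc * g j.succ
              else g j.succ))
          + (-1:ℤ)^(m+1) • I (fun j : Fin m => g j.castSucc))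
        + (-1:ℤ)^(m+2) • a g = 0 := by
    intro g
    have hzero : ∀ x : G,
        g 0 • a (Fin.snoc (fun i : Fin m => g i.succ) x)
          + ((Finset.range m).sum (fun i => (-1:ℤ)^(i+1) • a (Fin.snoc (fun j : Fin m =>
                if (j:ℕ) < i then g j.castSucc else if (j:ℕ) = i then g j.castSucc * g j.succ
                else g j.succ) x))
            + (-1:ℤ)^(m+1) • a (Fin.snoc (fun j : Fin m => g j.castSucc) (g (Fin.last m) * x)))
          + (-1:ℤ)^(m+2) • a g = 0 := by
      intro x
      rw [← aux_coboundary_snoc m a g x, hcoc]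
      rfl
    -- integrabilities
    have int1 : Integrable (fun x => g 0 • a (Fin.snoc (fun i : Fin m => g i.succ) x)) μ :=
      hintc _ (hact.comp (continuous_const.prodMk (cont_snoc _)))
    have int2 : Integrable (fun x => (Finset.range m).sum (fun i =>
        (-1:ℤ)^(i+1) • a (Fin.snoc (fun j : Fin m =>
          if (j:ℕ) < i then g j.castSucc else if (j:ℕ) = i then g j.castSucc * g j.succ
          else g j.succ) x))) μ := by
      apply integrable_finset_sum
      intro i _
      exact hintc _ ((cont_snoc _).const_smul ((-1:ℤ)^(i+1)))
    have cont3 : Continuous fun x : G =>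
        a (Fin.snoc (fun j : Fin m => g j.castSucc) (g (Fin.last m) * x)) :=
      (cont_snoc _).comp (continuous_mul_left (g (Fin.last m)))
    have int3 : Integrable (fun x =>
        (-1:ℤ)^(m+1) • a (Fin.snoc (fun j : Fin m => g j.castSucc) (g (Fin.last m) * x))) μ :=
      hintc _ (cont3.const_smul ((-1:ℤ)^(m+1)))
    have int4 : Integrable (fun _x : G => (-1:ℤ)^(m+2) • a g) μ := integrable_const _
    have hintegral0 : (∫ x, (g 0 • a (Fin.snoc (fun i : Fin m => g i.succ) x)
          + ((Finset.range m).sum (fun i => (-1:ℤ)^(i+1) • a (Fin.snoc (fun j : Fin m =>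
                if (j:ℕ) < i then g j.castSucc else if (j:ℕ) = i then g j.castSucc * g j.succ
                else g j.succ) x))
            + (-1:ℤ)^(m+1) • a (Fin.snoc (fun j : Fin m => g j.castSucc) (g (Fin.last m) * x)))
          + (-1:ℤ)^(m+2) • a g) ∂μ) = 0 := by
      simp only [hzero, integral_zero]
    have int23 : Integrable (fun x => (Finset.range m).sum (fun i =>
        (-1:ℤ)^(i+1) • a (Fin.snoc (fun j : Fin m =>
          if (j:ℕ) < i then g j.castSucc else if (j:ℕ) = i then g j.castSucc * g j.succ
          else g j.succ) x))
        + (-1:ℤ)^(m+1) • a (Fin.snoc (fun j : Fin m => g j.castSucc) (g (Fin.last m) * x))) μ :=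
      int2.add int3
    have int123 : Integrable (fun x => g 0 • a (Fin.snoc (fun i : Fin m => g i.succ) x)
        + ((Finset.range m).sum (fun i => (-1:ℤ)^(i+1) • a (Fin.snoc (fun j : Fin m =>
            if (j:ℕ) < i then g j.castSucc else if (j:ℕ) = i then g j.castSucc * g j.succ
            else g j.succ) x))
          + (-1:ℤ)^(m+1) • a (Fin.snoc (fun j : Fin m => g j.castSucc) (g (Fin.last m) * x)))) μ :=
      int1.add int23
    rw [integral_add int123 int4, integral_add int1 int23,
      integral_add int2 int3, integral_finset_sum _ (f := fun i x => (-1:ℤ)^(i+1) • a (Fin.snoc (fun j : Fin m =>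
          if (j:ℕ) < i then g j.castSucc else if (j:ℕ) = i then g j.castSucc * g j.succ
          else g j.succ) x)) (fun i _ =>
        hintc _ ((cont_snoc _).const_smul ((-1:ℤ)^(i+1))))] at hintegral0
    have e1 : (∫ x, g 0 • a (Fin.snoc (fun i : Fin m => g i.succ) x) ∂μ)
        = g 0 • I (fun i => g i.succ) := hGsmul _ _ (hint _)
    have e2 : ∀ i : ℕ, (∫ x, (-1:ℤ)^(i+1) • a (Fin.snoc (fun j : Fin m =>
          if (j:ℕ) < i then g j.castSucc else if (j:ℕ) = i then g j.castSucc * g j.succ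
          else g j.succ) x) ∂μ)
        = (-1:ℤ)^(i+1) • I (fun j : Fin m =>
            if (j:ℕ) < i then g j.castSucc else if (j:ℕ) = i then g j.castSucc * g j.succ
            else g j.succ) := fun i => hzsmul _ _
    have e3 : (∫ x, (-1:ℤ)^(m+1) • a (Fin.snoc (fun j : Fin m => g j.castSucc)
          (g (Fin.last m) * x)) ∂μ)
        = (-1:ℤ)^(m+1) • I (fun j : Fin m => g j.castSucc) := by
      rw [hzsmul]
      congr 1
      exact integral_mul_left_eq_self
        (fun y => a (Fin.snoc (fun j : Fin m => g j.castSucc) y)) (g (Fin.last m))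
    have e4 : (∫ _x : G, (-1:ℤ)^(m+2) • a g ∂μ) = (-1:ℤ)^(m+2) • a g := by
      simp
    rw [e1, e3, e4] at hintegral0
    simp only [e2] at hintegral0
    exact hintegral0
  -- define the primitive
  refine ⟨fun u => (-1:ℤ)^(m+1) • I u, contI.const_smul ((-1:ℤ)^(m+1)), ?_⟩
  funext g
  unfold groupCoboundary
  have hA : g 0 • ((-1:ℤ)^(m+1) • I (fun i => g i.succ))
      = (-1:ℤ)^(m+1) • (g 0 • I (fun i => g i.succ)) :=
    AddMonoidHom.map_zsmul (DistribMulAction.toAddMonoidHom E (g 0)) _ _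
  have hB : (Finset.range m).sum (fun i => (-1:ℤ)^(i+1) • ((-1:ℤ)^(m+1) • I (fun j : Fin m =>
        if (j:ℕ) < i then g j.castSucc else if (j:ℕ) = i then g j.castSucc * g j.succ
        else g j.succ)))
      = (-1:ℤ)^(m+1) • (Finset.range m).sum (fun i => (-1:ℤ)^(i+1) • I (fun j : Fin m =>
        if (j:ℕ) < i then g j.castSucc else if (j:ℕ) = i then g j.castSucc * g j.succ
        else g j.succ)) := by
    rw [Finset.smul_sum]
    exact Finset.sum_congr rfl fun i _ => smul_comm _ _ _
  have hC : (-1:ℤ)^(m+1) • ((-1:ℤ)^(m+1) • I (fun j : Fin m => g j.castSucc))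
      = (-1:ℤ)^(m+1) • ((-1:ℤ)^(m+1) • I (fun j : Fin m => g j.castSucc)) := rfl
  rw [hA, hB]
  have hkey := key2 g
  have hX : g 0 • I (fun i => g i.succ)
      + ((Finset.range m).sum (fun i => (-1:ℤ)^(i+1) • I (fun j : Fin m =>
            if (j:ℕ) < i then g j.castSucc else if (j:ℕ) = i then g j.castSucc * g j.succ
            else g j.succ))
        + (-1:ℤ)^(m+1) • I (fun j : Fin m => g j.castSucc))
      = (-1:ℤ)^(m+1) • a g := by
    have h5 : (-1:ℤ)^(m+2) = -((-1:ℤ)^(m+1)) := by ring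
    rw [h5, neg_smul] at hkey
    exact add_neg_eq_zero.mp hkey
  calc (-1:ℤ)^(m+1) • (g 0 • I (fun i => g i.succ))
        + (-1:ℤ)^(m+1) • (Finset.range m).sum (fun i => (-1:ℤ)^(i+1) • I (fun j : Fin m =>
            if (j:ℕ) < i then g j.castSucc else if (j:ℕ) = i then g j.castSucc * g j.succ
            else g j.succ))
        + (-1:ℤ)^(m+1) • ((-1:ℤ)^(m+1) • I (fun j : Fin m => g j.castSucc))
      = (-1:ℤ)^(m+1) • (g 0 • I (fun i => g i.succ)
        + ((Finset.range m).sum (fun i => (-1:ℤ)^(i+1) • I (fun j : Fin m =>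
            if (j:ℕ) < i then g j.castSucc else if (j:ℕ) = i then g j.castSucc * g j.succ
            else g j.succ))
          + (-1:ℤ)^(m+1) • I (fun j : Fin m => g j.castSucc))) := by
        rw [smul_add, smul_add, add_assoc]
    _ = (-1:ℤ)^(m+1) • ((-1:ℤ)^(m+1) • a g) := by rw [hX]
    _ = a g := by
        rw [smul_smul, ← pow_add]
        have : Even ((m+1) + (m+1)) := ⟨m+1, rfl⟩
        rw [this.neg_one_pow, one_smul]
end

section
/- Let φ: A → B be a unital homomorphism of Banach algebras with A finite-dimensional. If φ annihilates the Jacobson radical rad(A), then the orbit of φ under conjugation by the group B^× of invertible elements (acting by φ ↦ u·φ·u⁻¹) is closed in the space of unital Banach-algebra homomorphisms A → B (with the operator-norm topology). -/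
open Polynomial LinearMap Ideal TensorProduct


open Ideal

section RingLemmas
variable {R : Type*} [Ring R]

/-- If `1 + a*b` is a unit then so is `1 + b*a`. -/
lemma aux_isUnit_one_add_swap {a b : R} (h : IsUnit (1 + a * b)) : IsUnit (1 + b * a) := by
  obtain ⟨u, hu⟩ := h
  have h1 : (↑u⁻¹ : R) + a * b * ↑u⁻¹ = 1 := by
    calc (↑u⁻¹ : R) + a * b * ↑u⁻¹ = (1 + a * b) * ↑u⁻¹ := by noncomm_ring
    _ = ↑u * ↑u⁻¹ := by rw [hu]
    _ = 1 := u.mul_inv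
  have h2 : (↑u⁻¹ : R) + ↑u⁻¹ * (a * b) = 1 := by
    calc (↑u⁻¹ : R) + ↑u⁻¹ * (a * b) = ↑u⁻¹ * (1 + a * b) := by noncomm_ring
    _ = ↑u⁻¹ * ↑u := by rw [hu]
    _ = 1 := u.inv_mul
  refine ⟨⟨1 + b * a, 1 - b * ↑u⁻¹ * a, ?_, ?_⟩, rfl⟩
  · calc (1 + b * a) * (1 - b * ↑u⁻¹ * a)
        = 1 + b * a - b * ((↑u⁻¹ : R) + a * b * ↑u⁻¹) * a := by noncomm_ring
    _ = 1 := by rw [h1]; noncomm_ring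
  · calc (1 - b * ↑u⁻¹ * a) * (1 + b * a)
        = 1 + b * a - b * ((↑u⁻¹ : R) + ↑u⁻¹ * (a * b)) * a := by noncomm_ring
    _ = 1 := by rw [h2]; noncomm_ring

/-- Criterion for membership in the Jacobson radical. -/
lemma aux_mem_jacobson {x : R} (h : ∀ y : R, IsUnit (y * x + 1)) :
    x ∈ jacobson (⊥ : Ideal R) := by
  rw [mem_jacobson_iff]
  intro y
  obtain ⟨u, hu⟩ := h y
  refine ⟨↑u⁻¹, ?_⟩
  have h1 : (↑u⁻¹ : R) * (y * x + 1) = 1 := by rw [← hu]; exact u.inv_mul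
  have h2 : (↑u⁻¹ : R) * y * x + ↑u⁻¹ - 1 = 0 := by rw [← h1]; noncomm_ring
  simp [h2]

/-- 1 + element of the Jacobson radical is a unit. -/
lemma aux_isUnit_one_add {j : R} (hj : j ∈ jacobson (⊥ : Ideal R)) : IsUnit (1 + j) := by
  obtain ⟨z, hz⟩ := mem_jacobson_iff.mp hj 1
  simp only [mul_one, Submodule.mem_bot] at hz
  rw [sub_eq_zero] at hz
  have hz1 : z * (1 + j) = 1 := by rw [mul_add, mul_one, add_comm, hz]
  have hzj : z * j ∈ jacobson (⊥ : Ideal R) := Ideal.mul_mem_left _ z hj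
  obtain ⟨w, hw⟩ := mem_jacobson_iff.mp (neg_mem hzj) 1
  simp only [mul_one, Submodule.mem_bot] at hw
  rw [sub_eq_zero] at hw
  have hwz : w * z = 1 := by
    have hzeq : z = 1 + -(z * j) := by
      have := hz
      rw [← this]; abel
    rw [hzeq, mul_add, mul_one, add_comm, hw]
  have hwj : (1 + j) = w := by
    calc (1 + j) = (w * z) * (1 + j) := by rw [hwz, one_mul]
    _ = w * (z * (1 + j)) := by rw [mul_assoc]
    _ = w := by rw [hz1, mul_one]
  exact ⟨⟨1 + j, z, by rw [hwj, hwz], hz1⟩, rfl⟩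

/-- The Jacobson radical is closed under right multiplication. -/
lemma aux_jacobson_mul_right {j : R} (hj : j ∈ jacobson (⊥ : Ideal R)) (r : R) :
    j * r ∈ jacobson (⊥ : Ideal R) := by
  apply aux_mem_jacobson
  intro y
  have h1 : IsUnit (1 + r * (y * j)) :=
    aux_isUnit_one_add (Ideal.mul_mem_left _ _ (Ideal.mul_mem_left _ _ hj))
  have h2 : IsUnit (1 + (y * j) * r) := aux_isUnit_one_add_swap h1
  have : y * (j * r) + 1 = 1 + (y * j) * r := by noncomm_ring
  rw [this]; exact h2

/-- If a power of `x` lies in the Jacobson radical, then `1 + x` is a unit. -/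
lemma aux_isUnit_one_add_of_pow_mem {x : R} {m : ℕ} (h : x ^ m ∈ jacobson (⊥ : Ideal R)) :
    IsUnit (1 + x) := by
  set g : R := ∑ k ∈ Finset.range m, (-x) ^ k with hg
  set j : R := -((-x) ^ m) with hjdef
  have hjJ : j ∈ jacobson (⊥ : Ideal R) := by
    have : (-x) ^ m ∈ jacobson (⊥ : Ideal R) := by
      rw [neg_pow]
      exact Ideal.mul_mem_left _ _ h
    exact neg_mem this
  have h1 : g * (1 + x) = 1 + j := by
    have := geom_sum_mul (-x) m
    calc g * (1 + x) = -(g * (-x - 1)) := by noncomm_ring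
    _ = -((-x) ^ m - 1) := by rw [hg, this]
    _ = 1 + j := by rw [hjdef]; abel
  have h2 : (1 + x) * g = 1 + j := by
    have := mul_geom_sum (-x) m
    calc (1 + x) * g = -((-x - 1) * g) := by noncomm_ring
    _ = -((-x) ^ m - 1) := by rw [hg, this]
    _ = 1 + j := by rw [hjdef]; abel
  obtain ⟨u, hu⟩ := aux_isUnit_one_add hjJ
  have hr : (1 + x) * (g * ↑u⁻¹) = 1 := by
    rw [← mul_assoc, h2, ← hu, u.mul_inv]
  have hl : (↑u⁻¹ * g) * (1 + x) = 1 := by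
    rw [mul_assoc, h1, ← hu, u.inv_mul]
  have heq : g * ↑u⁻¹ = ↑u⁻¹ * g → True := fun _ => trivial
  -- combine left and right inverses
  have : ↑u⁻¹ * g = g * ↑u⁻¹ := by
    calc ↑u⁻¹ * g = (↑u⁻¹ * g) * ((1 + x) * (g * ↑u⁻¹)) := by rw [hr, mul_one]
    _ = ((↑u⁻¹ * g) * (1 + x)) * (g * ↑u⁻¹) := by noncomm_ring
    _ = g * ↑u⁻¹ := by rw [hl, one_mul]
  exact ⟨⟨1 + x, g * ↑u⁻¹, hr, by rw [← this, hl]⟩, rfl⟩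

end RingLemmas


open Polynomial LinearMap

section TracePow
variable {V : Type*} [AddCommGroup V] [Module ℝ V] [FiniteDimensional ℝ V]

lemma aux_trace_nilpotent {f : Module.End ℝ V} (hf : IsNilpotent f) :
    LinearMap.trace ℝ V f = 0 := by
  have := LinearMap.isNilpotent_trace_of_isNilpotent hf
  exact this.eq_zero

lemma aux_trace_mul_aeval (s : Module.End ℝ V)
    (h : ∀ k : ℕ, LinearMap.trace ℝ V (s ^ (k + 1)) = 0) (g : ℝ[X]) :
    LinearMap.trace ℝ V (s * aeval s g) = 0 := by
  induction g using Polynomial.induction_on' with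
  | add p q hp hq => rw [map_add, mul_add, map_add, hp, hq, add_zero]
  | monomial n c =>
      rw [aeval_monomial]
      have : s * (algebraMap ℝ (Module.End ℝ V) c * s ^ n) = c • s ^ (n + 1) := by
        rw [Algebra.smul_def, pow_succ', ← mul_assoc, ← Algebra.commutes c s, mul_assoc]
      rw [this, map_smul, h n, smul_zero]

lemma aux_semisimple_eq_zero {s : Module.End ℝ V} (hss : s.IsSemisimple)
    (h : ∀ k : ℕ, LinearMap.trace ℝ V (s ^ (k + 1)) = 0) : s = 0 := by
  by_contra hs0
  have hp0 : minpoly ℝ s ≠ 0 := minpoly.ne_zero_of_finite ℝ s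
  have hsq : Squarefree (minpoly ℝ s) := hss.minpoly_squarefree
  have hVnontriv : Nontrivial V := by
    by_contra hV
    have : Subsingleton V := not_nontrivial_iff_subsingleton.mp hV
    exact hs0 (Subsingleton.elim _ _)
  -- trace of aeval s g is 0 whenever g has zero constant coefficient
  have htr0 : ∀ g : ℝ[X], g.coeff 0 = 0 → LinearMap.trace ℝ V (aeval s g) = 0 := by
    intro g hg
    have hgX : g = X * g.divX := by
      conv_lhs => rw [← g.X_mul_divX_add]
      rw [hg, map_zero, add_zero]
    rw [hgX, _root_.map_mul, aeval_X]
    exact aux_trace_mul_aeval s h _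
  by_cases hX : X ∣ minpoly ℝ s
  · -- p = X * q with X ∤ q
    obtain ⟨q, hq⟩ := hX
    have hXq : ¬ X ∣ q := by
      intro hdvd
      obtain ⟨r, hr⟩ := hdvd
      have : (X : ℝ[X]) * X ∣ minpoly ℝ s := ⟨r, by rw [hq, hr]; ring⟩
      exact Polynomial.not_isUnit_X (hsq X this)
    have hcop : IsCoprime (X : ℝ[X]) q :=
      Polynomial.irreducible_X.coprime_iff_not_dvd.mpr hXq
    obtain ⟨u, v, huv⟩ := hcop
    set e : Module.End ℝ V := aeval s (u * X) with he
    have htre : LinearMap.trace ℝ V e = 0 := by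
      apply htr0
      simp [coeff_mul_X]
    have hvq : aeval s (v * q) = 1 - e := by
      have := congrArg (aeval s) huv
      rw [map_add, map_one] at this
      rw [← this]; abel
    have hidem : e * e = e := by
      have h1 : e * (1 - e) = 0 := by
        rw [← hvq, he, ← _root_.map_mul]
        have : u * X * (v * q) = (u * v) * (X * q) := by ring
        rw [this, _root_.map_mul, ← hq, minpoly.aeval, mul_zero]
      have := h1
      rw [mul_sub, mul_one, sub_eq_zero] at this
      exact this.symm
    have hene : e ≠ 0 := by
      intro he0
      have : minpoly ℝ s ∣ u * X := minpoly.dvd ℝ s (by rw [← he]; exact he0)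
      rw [hq] at this
      have hqu : q ∣ u := by
        have h2 : X * q ∣ X * u := by
          rwa [mul_comm u X] at this
        exact (mul_dvd_mul_iff_left (by exact Polynomial.X_ne_zero : (X:ℝ[X]) ≠ 0)).mp h2
      obtain ⟨w, hw⟩ := hqu
      have hqunit : IsUnit q := by
        have : q * (w * X + v) = 1 := by
          rw [← huv, hw]; ring
        exact IsUnit.of_mul_eq_one _ this
      -- then minpoly = X * unit, so s = 0
      obtain ⟨c, hc, hcq⟩ := Polynomial.isUnit_iff.mp hqunit
      have hmon : (minpoly ℝ s).Monic := minpoly.monic (Algebra.IsIntegral.isIntegral s)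
      have hc1 : c = 1 := by
        have := hmon
        rw [hq, ← hcq, Monic] at this
        simpa using this
      have hpX : minpoly ℝ s = X := by rw [hq, ← hcq, hc1]; simp
      have : s = 0 := by
        have := minpoly.aeval ℝ s
        rwa [hpX, aeval_X] at this
      exact hs0 this
    -- e is a nonzero idempotent, so its trace is a positive integer
    obtain ⟨P, hP⟩ := (LinearMap.isProj_iff_isIdempotentElem e).mpr (by
      exact hidem)
    have htrP : LinearMap.trace ℝ V e = (Module.finrank ℝ P : ℝ) := hP.trace
    have hPbot : P ≠ ⊥ := by
      intro hPb
      apply hene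
      ext v
      have := hP.map_mem v
      rw [hPb, Submodule.mem_bot] at this
      simpa using this
    have : Module.finrank ℝ P = 0 := by
      have := htre
      rw [htrP] at this
      exact_mod_cast this
    exact hPbot (Submodule.finrank_eq_zero.mp this)
  · -- X coprime to p : s is invertible, trace 1 = 0, contradiction
    have hcop : IsCoprime (X : ℝ[X]) (minpoly ℝ s) :=
      Polynomial.irreducible_X.coprime_iff_not_dvd.mpr hX
    obtain ⟨u, v, huv⟩ := hcop
    have h1 : aeval s (u * X) = 1 := by
      have h2 := congrArg (aeval s) huv
      simp only [map_add, _root_.map_mul, map_one, minpoly.aeval, mul_zero, add_zero] at h2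
      rw [_root_.map_mul]
      exact h2
    have : LinearMap.trace ℝ V (1 : Module.End ℝ V) = 0 := by
      rw [← h1]
      apply htr0
      simp [coeff_mul_X]
    rw [LinearMap.trace_one] at this
    have hfr : Module.finrank ℝ V = 0 := by exact_mod_cast this
    have : Subsingleton V := Module.finrank_zero_iff.mp hfr
    exact hs0 (Subsingleton.elim _ _)

end TracePow

section BL3
variable {V : Type*} [AddCommGroup V] [Module ℝ V] [FiniteDimensional ℝ V]

/-- If all positive powers of an endomorphism have zero trace, it is nilpotent. -/
lemma aux_isNilpotent_of_trace_pow (f : Module.End ℝ V)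
    (h : ∀ k : ℕ, LinearMap.trace ℝ V (f ^ (k + 1)) = 0) : IsNilpotent f := by
  obtain ⟨n, hn, s, hs, hnil, hss, hfns⟩ := Module.End.exists_isNilpotent_isSemisimple (f := f)
  have hcomm : Commute f n := Algebra.commute_of_mem_adjoin_self hn
  have hsf : s = f + (-n) := by rw [hfns]; abel
  have htrs : ∀ k : ℕ, LinearMap.trace ℝ V (s ^ (k + 1)) = 0 := by
    intro k
    have hc : Commute f (-n) := hcomm.neg_right
    rw [hsf, hc.add_pow]
    rw [_root_.map_sum]
    apply Finset.sum_eq_zero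
    intro m hm
    by_cases hmk : m = k + 1
    · subst hmk
      simp only [Nat.sub_self, pow_zero, mul_one, Nat.choose_self, Nat.cast_one]
      exact h k
    · have hlt : m < k + 1 := lt_of_le_of_ne (Nat.lt_succ_iff.mp (Finset.mem_range.mp hm)) hmk
      have hnil1 : IsNilpotent ((-n) ^ (k + 1 - m)) :=
        (hnil.neg).pow_of_pos (by omega)
      have hnil2 : IsNilpotent (f ^ m * (-n) ^ (k + 1 - m)) :=
        Commute.isNilpotent_mul_left ((hcomm.neg_right).pow_pow m (k + 1 - m)) hnil1
      have hnil3 : IsNilpotent (f ^ m * (-n) ^ (k + 1 - m) * ((k+1).choose m : Module.End ℝ V)) :=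
        Commute.isNilpotent_mul_right (Nat.commute_cast _ _) hnil2
      exact aux_trace_nilpotent hnil3
  have hs0 : s = 0 := aux_semisimple_eq_zero hss htrs
  rw [hfns, hs0, add_zero]
  exact hnil

end BL3



section AlgLemmas
variable {A : Type*} [Ring A] [Algebra ℝ A] [FiniteDimensional ℝ A]

/-- Elements of the Jacobson radical of a finite-dimensional algebra are nilpotent. -/
lemma aux_jacobson_nilpotent {j : A} (hj : j ∈ jacobson (⊥ : Ideal A)) : IsNilpotent j := by
  have hp0 : minpoly ℝ j ≠ 0 := minpoly.ne_zero_of_finite ℝ j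
  obtain ⟨q, hq, hXq⟩ := (minpoly ℝ j).exists_eq_pow_rootMultiplicity_mul_and_not_dvd hp0 0
  rw [map_zero, sub_zero] at hq hXq
  set m := rootMultiplicity 0 (minpoly ℝ j) with hm
  set c := q.coeff 0 with hc
  have hc0 : c ≠ 0 := fun h => hXq (X_dvd_iff.mpr h)
  set d := aeval j (divX q) with hd
  have hqev : aeval j q = d * j + c • 1 := by
    have h1 : X * divX q + C c = q := q.X_mul_divX_add
    have h2 := congrArg (aeval j) h1
    rw [map_add, _root_.map_mul, aeval_X, aeval_C, Algebra.algebraMap_eq_smul_one] at h2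
    have hcomm : j * d = d * j := by
      have h3 : aeval j (X * divX q) = aeval j (divX q * X) := by rw [mul_comm]
      rw [_root_.map_mul, _root_.map_mul, aeval_X] at h3
      exact h3
    rw [← h2, hcomm]
  have hdj : d * j ∈ jacobson (⊥ : Ideal A) := Ideal.mul_mem_left _ _ hj
  set x := c⁻¹ • (d * j) with hx
  have hxJ : x ∈ jacobson (⊥ : Ideal A) := by
    rw [hx, Algebra.smul_def]
    exact Ideal.mul_mem_left _ _ hdj
  have hkey : aeval j q = c • (1 + x) := by
    rw [hqev, smul_add, hx, smul_smul, mul_inv_cancel₀ hc0, one_smul, add_comm]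
  have hev : j ^ m * aeval j q = 0 := by
    have := minpoly.aeval ℝ j
    rw [hq, _root_.map_mul, _root_.map_pow, aeval_X] at this
    exact this
  have hzero : j ^ m * (1 + x) = 0 := by
    have h4 : c • (j ^ m * (1 + x)) = 0 := by
      rw [← mul_smul_comm, ← hkey, hev]
    rcases smul_eq_zero.mp h4 with h5 | h5
    · exact absurd h5 hc0
    · exact h5
  obtain ⟨u, hu⟩ := aux_isUnit_one_add hxJ
  refine ⟨m, ?_⟩
  calc j ^ m = j ^ m * ((1 + x) * ↑u⁻¹) := by rw [← hu, u.mul_inv, mul_one]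
  _ = (j ^ m * (1 + x)) * ↑u⁻¹ := by rw [mul_assoc]
  _ = 0 := by rw [hzero, zero_mul]

variable (A) in
/-- The trace form of a finite-dimensional algebra. -/
noncomputable def auxT : A →ₗ[ℝ] A →ₗ[ℝ] ℝ :=
  LinearMap.compr₂ (LinearMap.mul ℝ A)
    ((LinearMap.trace ℝ A) ∘ₗ (Algebra.lmul ℝ A).toLinearMap)

lemma auxT_apply (a b : A) :
    auxT A a b = LinearMap.trace ℝ A (Algebra.lmul ℝ A (a * b)) := rfl

lemma auxT_symm (a b : A) : auxT A a b = auxT A b a := by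
  rw [auxT_apply, auxT_apply, _root_.map_mul (Algebra.lmul ℝ A) a b,
    _root_.map_mul (Algebra.lmul ℝ A) b a]
  exact LinearMap.trace_mul_comm ℝ _ _

lemma auxT_assoc (a b c : A) : auxT A (a * b) c = auxT A a (b * c) := by
  rw [auxT_apply, auxT_apply, mul_assoc]

lemma auxT_cyclic (a p q : A) : auxT A (a * p) q = auxT A p (q * a) := by
  rw [auxT_assoc, auxT_symm, auxT_assoc]

lemma auxT_left_J {a : A} (ha : a ∈ jacobson (⊥ : Ideal A)) (b : A) : auxT A a b = 0 := by
  rw [auxT_apply]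
  apply aux_trace_nilpotent
  exact IsNilpotent.map (aux_jacobson_nilpotent (aux_jacobson_mul_right ha b)) (Algebra.lmul ℝ A)

lemma auxT_right_J {a : A} (ha : a ∈ jacobson (⊥ : Ideal A)) (b : A) : auxT A b a = 0 := by
  rw [auxT_symm]; exact auxT_left_J ha b

lemma auxT_ker_J {a : A} (h : ∀ b : A, auxT A a b = 0) : a ∈ jacobson (⊥ : Ideal A) := by
  apply aux_mem_jacobson
  intro y
  have hnil : IsNilpotent (Algebra.lmul ℝ A (a * y)) := by
    apply aux_isNilpotent_of_trace_pow
    intro k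
    rw [← _root_.map_pow]
    have : (a * y) ^ (k + 1) = a * (y * (a * y) ^ k) := by
      rw [pow_succ', mul_assoc]
    rw [this]
    exact h _
  have hnil2 : IsNilpotent (a * y) := by
    obtain ⟨n, hn⟩ := hnil
    refine ⟨n, ?_⟩
    have := congrArg (fun f => f 1) (by rw [← _root_.map_pow] at hn; exact hn :
      (Algebra.lmul ℝ A) ((a * y) ^ n) = 0)
    simpa using this
  obtain ⟨n, hn⟩ := hnil2
  have hpow : (a * y) ^ n ∈ jacobson (⊥ : Ideal A) := by rw [hn]; exact zero_mem _
  have h1 : IsUnit (1 + a * y) := aux_isUnit_one_add_of_pow_mem hpow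
  have h2 : IsUnit (1 + y * a) := aux_isUnit_one_add_swap h1
  rwa [add_comm] at h2

end AlgLemmas

section TensorPart
variable {A : Type*} [Ring A] [Algebra ℝ A] [FiniteDimensional ℝ A]

open TensorProduct

variable (A) in
/-- The subspace `J ⊗ A + A ⊗ J` of `A ⊗ A`. -/
noncomputable def auxW : Submodule ℝ (A ⊗[ℝ] A) :=
  LinearMap.range (TensorProduct.map
      (Submodule.restrictScalars ℝ (jacobson (⊥ : Ideal A))).subtype LinearMap.id) ⊔
  LinearMap.range (TensorProduct.map LinearMap.id
      (Submodule.restrictScalars ℝ (jacobson (⊥ : Ideal A))).subtype)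

lemma aux_lift_mem {M : Type*} [AddCommGroup M] [Module ℝ M]
    (f : A →ₗ[ℝ] A →ₗ[ℝ] M) (N : Submodule ℝ M)
    (hl : ∀ j ∈ jacobson (⊥ : Ideal A), ∀ b, f j b ∈ N)
    (hr : ∀ j ∈ jacobson (⊥ : Ideal A), ∀ b, f b j ∈ N)
    {t : A ⊗[ℝ] A} (ht : t ∈ auxW A) : TensorProduct.lift f t ∈ N := by
  rw [auxW, Submodule.mem_sup] at ht
  obtain ⟨t₁, ht₁, t₂, ht₂, rfl⟩ := ht
  rw [_root_.map_add]
  apply add_mem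
  · obtain ⟨u, rfl⟩ := ht₁
    induction u with
    | zero => simp only [_root_.map_zero]; exact zero_mem N
    | tmul p q =>
        rw [TensorProduct.map_tmul, TensorProduct.lift.tmul]
        exact hl p.1 p.2 _
    | add u v hu hv => rw [_root_.map_add, _root_.map_add]; exact add_mem hu hv
  · obtain ⟨u, rfl⟩ := ht₂
    induction u with
    | zero => simp only [_root_.map_zero]; exact zero_mem N
    | tmul p q =>
        rw [TensorProduct.map_tmul, TensorProduct.lift.tmul]
        exact hr q.1 q.2 _
    | add u v hu hv => rw [_root_.map_add, _root_.map_add]; exact add_mem hu hv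

lemma aux_W_stable (F G : A →ₗ[ℝ] A)
    (hF : ∀ j ∈ jacobson (⊥ : Ideal A), F j ∈ jacobson (⊥ : Ideal A))
    (hG : ∀ j ∈ jacobson (⊥ : Ideal A), G j ∈ jacobson (⊥ : Ideal A))
    {t : A ⊗[ℝ] A} (ht : t ∈ auxW A) : TensorProduct.map F G t ∈ auxW A := by
  rw [auxW, Submodule.mem_sup] at ht
  obtain ⟨t₁, ht₁, t₂, ht₂, rfl⟩ := ht
  rw [_root_.map_add]
  apply add_mem
  · apply Submodule.mem_sup_left
    obtain ⟨u, rfl⟩ := ht₁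
    induction u with
    | zero => simp only [_root_.map_zero]; exact zero_mem _
    | tmul p q =>
        rw [TensorProduct.map_tmul, TensorProduct.map_tmul]
        exact ⟨(⟨F p.1, hF p.1 p.2⟩ : Submodule.restrictScalars ℝ (jacobson (⊥:Ideal A))) ⊗ₜ[ℝ]
          (G q), by rw [TensorProduct.map_tmul]; rfl⟩
    | add u v hu hv =>
        rw [_root_.map_add, _root_.map_add]
        exact add_mem hu hv
  · apply Submodule.mem_sup_right
    obtain ⟨u, rfl⟩ := ht₂
    induction u with
    | zero => simp only [_root_.map_zero]; exact zero_mem _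
    | tmul p q =>
        rw [TensorProduct.map_tmul, TensorProduct.map_tmul]
        exact ⟨(F p) ⊗ₜ[ℝ] (⟨G q.1, hG q.1 q.2⟩ :
          Submodule.restrictScalars ℝ (jacobson (⊥:Ideal A))), by rw [TensorProduct.map_tmul]; rfl⟩
    | add u v hu hv =>
        rw [_root_.map_add, _root_.map_add]
        exact add_mem hu hv

end TensorPart


section Key
variable {A : Type*} [Ring A] [Algebra ℝ A] [FiniteDimensional ℝ A]


lemma aux_key :
    ∃ (N : ℕ) (x y : Fin N → A),
      ((∑ i, x i * y i) - 1 ∈ jacobson (⊥ : Ideal A)) ∧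
      ∀ a : A, ((∑ i, (a * x i) ⊗ₜ[ℝ] y i) - ∑ i, x i ⊗ₜ[ℝ] (y i * a)) ∈ auxW A := by
  classical
  set J : Ideal A := jacobson (⊥ : Ideal A) with hJ
  set Jr : Submodule ℝ A := Submodule.restrictScalars ℝ J with hJr
  obtain ⟨S, hS⟩ := Submodule.exists_isCompl Jr
  have hS' : IsCompl S Jr := hS.symm
  set π : A →ₗ[ℝ] S := S.linearProjOfIsCompl Jr hS' with hπ
  -- basic properties of π
  have hπS : ∀ v : S, π (v : A) = v := fun v => Submodule.linearProjOfIsCompl_apply_left hS' v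
  have hπJ : ∀ a ∈ Jr, π a = 0 := fun a ha =>
    Submodule.linearProjOfIsCompl_apply_right' hS' ha
  have hdiff : ∀ a : A, a - (π a : A) ∈ J := by
    intro a
    have h1 : π (a - (π a : A)) = 0 := by
      rw [_root_.map_sub, hπS (π a), sub_self]
    -- a - π a ∈ ker π = Jr
    have h2 : a - (π a : A) ∈ Jr := by
      rw [← Submodule.linearProjOfIsCompl_ker hS']
      exact LinearMap.mem_ker.mpr h1
    exact h2
  have hπeq : ∀ p q : A, p - q ∈ J → π p = π q := by
    intro p q hpq
    have : π (p - q) = 0 := hπJ _ hpq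
    rw [_root_.map_sub, sub_eq_zero] at this
    exact this
  -- the trace form restricted to S
  set T' : S →ₗ[ℝ] S →ₗ[ℝ] ℝ := (auxT A).compl₁₂ S.subtype S.subtype with hT'
  have hT'app : ∀ v w : S, T' v w = auxT A (v : A) (w : A) := fun v w => rfl
  have hsymm : LinearMap.BilinForm.IsSymm T' := ⟨fun v w => by
    exact auxT_symm _ _⟩
  have hND : LinearMap.BilinForm.Nondegenerate T' := by
    refine (LinearMap.IsRefl.nondegenerate_iff_separatingLeft (hsymm.isRefl : LinearMap.IsRefl T')).mpr ?_
    intro v hv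
    have hvJ : (v : A) ∈ J := by
      apply auxT_ker_J
      intro b
      have hb : b = ((π b : S) : A) + (b - ((π b : S) : A)) := by abel
      have h1 : auxT A (v : A) ((π b : S) : A) = 0 := hv (π b)
      have h2 : auxT A (v : A) (b - ((π b : S) : A)) = 0 := auxT_right_J (hdiff b) _
      rw [hb, _root_.map_add ((auxT A) (v : A)) _ _, h1, h2, add_zero]
    have : v = 0 := by
      have := Submodule.disjoint_def.mp hS.disjoint (v : A) hvJ v.2
      exact Subtype.ext this
    exact this
  -- choose a basis of S and its dual basis w.r.t. T'
  set nn : ℕ := Module.finrank ℝ S with hnn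
  set b : Module.Basis (Fin nn) ℝ S := Module.finBasis ℝ S with hb
  set y : Module.Basis (Fin nn) ℝ S := LinearMap.BilinForm.dualBasis T' hND b with hy
  have hpair1 : ∀ i j, T' (y i) (b j) = if j = i then 1 else 0 := fun i j =>
    LinearMap.BilinForm.apply_dualBasis_left hND b i j
  have hpair2 : ∀ i j, T' (b i) (y j) = if i = j then 1 else 0 := fun i j =>
    LinearMap.BilinForm.apply_dualBasis_right hND hsymm b i j
  set x : Fin nn → A := fun i => ((b i : S) : A) with hx
  set yv : Fin nn → A := fun i => ((y i : S) : A) with hyv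
  -- expansion lemmas
  have hcoef : ∀ (v : S) j, T' v (y j) = b.repr v j := by
    intro v j
    conv_lhs => rw [← b.sum_repr v]
    rw [_root_.map_sum, LinearMap.sum_apply]
    simp only [map_smul, LinearMap.smul_apply, hpair2, smul_eq_mul, mul_ite, mul_one, mul_zero]
    rw [Finset.sum_ite_eq' Finset.univ j (fun i => b.repr v i)]
    simp
  have hexp_b : ∀ v : S, ∑ j, T' v (y j) • b j = v := by
    intro v
    simp only [hcoef]
    exact b.sum_repr v
  have hrepr_y : ∀ (v : S) j, y.repr v j = T' (b j) v := by
    intro v j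
    conv_rhs => rw [← y.sum_repr v]
    rw [_root_.map_sum ((T' (b j)) : S →ₗ[ℝ] ℝ)]
    simp only [map_smul, smul_eq_mul, hpair2, mul_ite, mul_one, mul_zero]
    rw [Finset.sum_ite_eq Finset.univ j (fun i => y.repr v i)]
    simp
  -- the two coordinate expansions, in A
  have hL : ∀ (a : A) i, ((π (a * x i) : S) : A) = ∑ j, auxT A (a * x i) (yv j) • x j := by
    intro a i
    have e1 : ((π (a * x i) : S) : A) = ((∑ j, T' (π (a * x i)) (y j) • b j : S) : A) := by
      rw [hexp_b]
    rw [e1, Submodule.coe_sum]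
    apply Finset.sum_congr rfl
    intro j _
    rw [Submodule.coe_smul]
    congr 1
    have hz : auxT A ((a * x i) - ((π (a * x i) : S) : A)) (yv j) = 0 :=
      auxT_left_J (hdiff _) _
    rw [_root_.map_sub, LinearMap.sub_apply, sub_eq_zero] at hz
    rw [hT'app]
    exact hz.symm
  have hR : ∀ (a : A) i, ((π (yv i * a) : S) : A) = ∑ j, auxT A (x j) (yv i * a) • yv j := by
    intro a i
    have e1 : ((π (yv i * a) : S) : A) = ((∑ j, y.repr (π (yv i * a)) j • y j : S) : A) := by
      rw [y.sum_repr]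
    rw [e1, Submodule.coe_sum]
    apply Finset.sum_congr rfl
    intro j _
    rw [Submodule.coe_smul]
    congr 1
    rw [hrepr_y, hT'app]
    have hz : auxT A (x j) ((yv i * a) - ((π (yv i * a) : S) : A)) = 0 :=
      auxT_right_J (hdiff _) _
    rw [_root_.map_sub ((auxT A) (x j)), sub_eq_zero] at hz
    exact hz.symm
  -- the fundamental swap identity mod W
  have hswap : ∀ a : A,
      ((∑ i, (a * x i) ⊗ₜ[ℝ] yv i) - ∑ i, x i ⊗ₜ[ℝ] (yv i * a)) ∈ auxW A := by
    intro a
    have hmid : (∑ i, (((π (a * x i) : S) : A)) ⊗ₜ[ℝ] (yv i))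
        = ∑ i, (x i) ⊗ₜ[ℝ] (((π (yv i * a) : S) : A)) := by
      simp only [hL, hR]
      simp only [TensorProduct.sum_tmul, TensorProduct.tmul_sum, TensorProduct.smul_tmul',
        TensorProduct.tmul_smul]
      rw [Finset.sum_comm]
      apply Finset.sum_congr rfl; intro i _
      apply Finset.sum_congr rfl; intro j _
      rw [auxT_cyclic]
    have h1 : (∑ i, (a * x i) ⊗ₜ[ℝ] yv i) - (∑ i, (((π (a * x i) : S) : A)) ⊗ₜ[ℝ] yv i)
        ∈ auxW A := by
      rw [← Finset.sum_sub_distrib]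
      apply Submodule.sum_mem
      intro i _
      rw [← TensorProduct.sub_tmul]
      apply Submodule.mem_sup_left
      exact ⟨(⟨_, hdiff (a * x i)⟩ :
        Submodule.restrictScalars ℝ (jacobson (⊥ : Ideal A))) ⊗ₜ[ℝ] yv i, by
          rw [TensorProduct.map_tmul]; rfl⟩
    have h2 : (∑ i, x i ⊗ₜ[ℝ] (((π (yv i * a) : S) : A))) - (∑ i, x i ⊗ₜ[ℝ] (yv i * a))
        ∈ auxW A := by
      rw [← Finset.sum_sub_distrib]
      apply Submodule.sum_mem
      intro i _
      rw [← TensorProduct.tmul_sub]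
      apply Submodule.mem_sup_right
      refine ⟨x i ⊗ₜ[ℝ] (⟨_, ?_⟩ :
        Submodule.restrictScalars ℝ (jacobson (⊥ : Ideal A))), by
          rw [TensorProduct.map_tmul]; rfl⟩
      have := hdiff (yv i * a)
      have hneg := neg_mem this
      rw [neg_sub] at hneg
      exact hneg
    have hdec : (∑ i, (a * x i) ⊗ₜ[ℝ] yv i) - ∑ i, x i ⊗ₜ[ℝ] (yv i * a)
        = ((∑ i, (a * x i) ⊗ₜ[ℝ] yv i) - (∑ i, (((π (a * x i) : S) : A)) ⊗ₜ[ℝ] yv i))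
          + ((∑ i, x i ⊗ₜ[ℝ] (((π (yv i * a) : S) : A))) - (∑ i, x i ⊗ₜ[ℝ] (yv i * a))) := by
      rw [hmid]; abel
    rw [hdec]
    exact add_mem h1 h2
  -- the Casimir-type element z
  set z : A := ∑ i, x i * yv i with hzdef
  have hzcen : ∀ a : A, a * z - z * a ∈ jacobson (⊥ : Ideal A) := by
    intro a
    have hm := aux_lift_mem (LinearMap.mul ℝ A) Jr
      (fun j hj c => aux_jacobson_mul_right hj c)
      (fun j hj c => Ideal.mul_mem_left _ c hj) (hswap a)
    have hcomp : TensorProduct.lift (LinearMap.mul ℝ A)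
        ((∑ i, (a * x i) ⊗ₜ[ℝ] yv i) - ∑ i, x i ⊗ₜ[ℝ] (yv i * a)) = a * z - z * a := by
      rw [_root_.map_sub, _root_.map_sum, _root_.map_sum]
      simp only [TensorProduct.lift.tmul, LinearMap.mul_apply']
      congr 1
      · rw [hzdef, Finset.mul_sum]
        exact Finset.sum_congr rfl fun i _ => by rw [mul_assoc]
      · rw [hzdef, Finset.sum_mul]
        exact Finset.sum_congr rfl fun i _ => by rw [mul_assoc]
    rw [hcomp] at hm
    exact hm
  -- right-multiplication operators on S
  set ρ : A → Module.End ℝ S := fun d => π ∘ₗ (LinearMap.mulRight ℝ d) ∘ₗ S.subtype with hρ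
  have hρ_apply : ∀ d (v : S), ρ d v = π ((v : A) * d) := fun _ _ => rfl
  have hρcomp : ∀ d e, ρ d ∘ₗ ρ e = ρ (e * d) := by
    intro d e
    apply LinearMap.ext
    intro v
    show π (((π ((v : A) * e) : S) : A) * d) = π ((v : A) * (e * d))
    apply hπeq
    have h1 : ((π ((v : A) * e) : S) : A) - (v : A) * e ∈ jacobson (⊥ : Ideal A) := by
      have := neg_mem (hdiff ((v : A) * e)); rwa [neg_sub] at this
    have := aux_jacobson_mul_right h1 d
    rwa [sub_mul, mul_assoc] at this
  have hρpow : ∀ d k, (ρ d) ^ (k + 1) = ρ (d ^ (k + 1)) := by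
    intro d k
    induction k with
    | zero => rw [pow_one, pow_one]
    | succ k ih =>
        rw [pow_succ, ih, Module.End.mul_eq_comp, hρcomp, ← pow_succ']
  have htraceρ : ∀ d, LinearMap.trace ℝ S (ρ d) = ∑ i, auxT A (x i) (yv i * d) := by
    intro d
    rw [LinearMap.trace_eq_matrix_trace ℝ y (ρ d), Matrix.trace]
    apply Finset.sum_congr rfl
    intro i _
    rw [Matrix.diag_apply, LinearMap.toMatrix_apply, hρ_apply, hrepr_y, hT'app]
    have hz2 : auxT A (x i) ((yv i * d) - ((π (yv i * d) : S) : A)) = 0 :=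
      auxT_right_J (hdiff _) _
    rw [_root_.map_sub ((auxT A) (x i)), sub_eq_zero] at hz2
    exact hz2.symm
  have hTz : ∀ (v : S) (c : A), auxT A (z * (v : A)) c
      = ∑ i, auxT A (x i) (yv i * ((v : A) * c)) := by
    intro v c
    have h1 : z * (v : A) = ∑ i, x i * (yv i * (v : A)) := by
      rw [hzdef, Finset.sum_mul]
      exact Finset.sum_congr rfl fun i _ => by rw [mul_assoc]
    rw [h1, _root_.map_sum (auxT A), LinearMap.sum_apply]
    apply Finset.sum_congr rfl
    intro i _
    rw [auxT_assoc, mul_assoc]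
  -- injectivity of left multiplication by z (projected to S)
  set G : Module.End ℝ S := π ∘ₗ (LinearMap.mulLeft ℝ z) ∘ₗ S.subtype with hG
  have hGapp : ∀ v : S, G v = π (z * (v : A)) := fun _ => rfl
  have hGinj : Function.Injective G := by
    rw [← LinearMap.ker_eq_bot]
    rw [Submodule.eq_bot_iff]
    intro v hv
    rw [LinearMap.mem_ker] at hv
    rw [hGapp] at hv
    have hzvJ : z * (v : A) ∈ jacobson (⊥ : Ideal A) := by
      have := hdiff (z * (v : A))
      rw [hv] at this
      simpa using this
    have htr0 : ∀ c k, LinearMap.trace ℝ S ((ρ ((v : A) * c)) ^ (k + 1)) = 0 := by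
      intro c k
      rw [hρpow, htraceρ]
      have hrearr : ((v : A) * c) ^ (k + 1) = (v : A) * (c * ((v : A) * c) ^ k) := by
        rw [pow_succ', mul_assoc]
      calc ∑ i, auxT A (x i) (yv i * (((v : A) * c) ^ (k + 1)))
          = ∑ i, auxT A (x i) (yv i * ((v : A) * (c * ((v : A) * c) ^ k))) := by rw [hrearr]
      _ = auxT A (z * (v : A)) (c * ((v : A) * c) ^ k) := (hTz v _).symm
      _ = 0 := auxT_left_J hzvJ _
    have hunit : ∀ c, IsUnit (c * (v : A) + 1) := by
      intro c
      obtain ⟨k, hk⟩ := aux_isNilpotent_of_trace_pow _ (htr0 c)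
      have hk1 : (ρ ((v : A) * c)) ^ (k + 1) = 0 := by rw [pow_succ, hk, zero_mul]
      rw [hρpow] at hk1
      set e : A := ((v : A) * c) ^ (k + 1) with he
      have h1 : ∀ u : S, ((u : A) * e) ∈ jacobson (⊥ : Ideal A) := by
        intro u
        have h2 : π ((u : A) * e) = 0 := by
          have := DFunLike.congr_fun hk1 u
          rw [hρ_apply] at this
          simpa using this
        have := hdiff ((u : A) * e)
        rw [h2] at this
        simpa using this
      have h3 : (1 - ((π 1 : S) : A)) * e ∈ jacobson (⊥ : Ideal A) :=
        aux_jacobson_mul_right (hdiff 1) e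
      have hmemJ : e ∈ jacobson (⊥ : Ideal A) := by
        have hsplit : e = ((π 1 : S) : A) * e + (1 - ((π 1 : S) : A)) * e := by
          rw [← add_mul]; simp
        rw [hsplit]
        exact add_mem (h1 (π 1)) h3
      have h4 : IsUnit (1 + (v : A) * c) := aux_isUnit_one_add_of_pow_mem hmemJ
      have h5 := aux_isUnit_one_add_swap h4
      rwa [add_comm] at h5
    have hvJ : (v : A) ∈ jacobson (⊥ : Ideal A) := aux_mem_jacobson hunit
    exact Subtype.ext (Submodule.disjoint_def.mp hS.disjoint _ hvJ v.2)
  have hGsurj : Function.Surjective G := LinearMap.injective_iff_surjective.mp hGinj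
  obtain ⟨w', hw'⟩ := hGsurj (π 1)
  set w : A := (w' : A) with hwdef
  have hzw : z * w - 1 ∈ jacobson (⊥ : Ideal A) := by
    have h1 : z * w - ((π (z * w) : S) : A) ∈ jacobson (⊥ : Ideal A) := hdiff _
    have h2 : ((π (z * w) : S) : A) = ((π 1 : S) : A) := by
      rw [show π (z * w) = π 1 from hw']
    have h3 : ((π 1 : S) : A) - 1 ∈ jacobson (⊥ : Ideal A) := by
      have := neg_mem (hdiff 1); rwa [neg_sub] at this
    have hsplit : z * w - 1 = (z * w - ((π (z * w) : S) : A)) + (((π (z * w) : S) : A) - 1) := by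
      abel
    rw [hsplit]
    refine add_mem h1 ?_
    rw [h2]
    exact h3
  have hwz : w * z - 1 ∈ jacobson (⊥ : Ideal A) := by
    have hc := hzcen w
    have hsplit : w * z - 1 = (w * z - z * w) + (z * w - 1) := by abel
    rw [hsplit]
    exact add_mem hc hzw
  have htrans : ∀ {p q r : A}, p - q ∈ jacobson (⊥ : Ideal A) →
      q - r ∈ jacobson (⊥ : Ideal A) → p - r ∈ jacobson (⊥ : Ideal A) := by
    intro p q r h1 h2
    have := add_mem h1 h2; rwa [sub_add_sub_cancel] at this
  have hwcen : ∀ a : A, a * w - w * a ∈ jacobson (⊥ : Ideal A) := by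
    intro a
    have s1 : a * w - (w * z) * (a * w) ∈ jacobson (⊥ : Ideal A) := by
      have heq : a * w - (w * z) * (a * w) = -((w * z - 1) * (a * w)) := by noncomm_ring
      rw [heq]
      exact neg_mem (aux_jacobson_mul_right hwz _)
    have s2 : (w * z) * (a * w) - (w * (a * z)) * w ∈ jacobson (⊥ : Ideal A) := by
      have heq : (w * z) * (a * w) - (w * (a * z)) * w = (w * ((z * a) - (a * z))) * w := by
        noncomm_ring
      rw [heq]
      apply aux_jacobson_mul_right
      apply Ideal.mul_mem_left
      have := neg_mem (hzcen a); rwa [neg_sub] at this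
    have s3 : (w * (a * z)) * w - w * a ∈ jacobson (⊥ : Ideal A) := by
      have heq : (w * (a * z)) * w - w * a = ((w * a) * (z * w) - (w * a) * 1) := by noncomm_ring
      rw [heq, ← mul_sub]
      exact Ideal.mul_mem_left _ _ hzw
    exact htrans (htrans s1 s2) s3
  -- the final family
  refine ⟨nn, fun i => w * x i, yv, ?_, ?_⟩
  · have heq : (∑ i, (w * x i) * yv i) = w * z := by
      rw [hzdef, Finset.mul_sum]
      exact Finset.sum_congr rfl fun i _ => by rw [mul_assoc]
    rw [heq]
    exact hwz
  · intro a
    have hstab := aux_W_stable (A := A) (LinearMap.mulLeft ℝ w) LinearMap.id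
      (fun j hj => Ideal.mul_mem_left _ w hj) (fun j hj => hj) (hswap a)
    have hPhi : TensorProduct.map (LinearMap.mulLeft ℝ w) LinearMap.id
        ((∑ i, (a * x i) ⊗ₜ[ℝ] yv i) - ∑ i, x i ⊗ₜ[ℝ] (yv i * a))
        = (∑ i, (w * (a * x i)) ⊗ₜ[ℝ] yv i) - ∑ i, (w * x i) ⊗ₜ[ℝ] (yv i * a) := by
      rw [_root_.map_sub, _root_.map_sum, _root_.map_sum]
      simp [TensorProduct.map_tmul]
    rw [hPhi] at hstab
    have hext : (∑ i, (a * (w * x i)) ⊗ₜ[ℝ] yv i) - (∑ i, (w * (a * x i)) ⊗ₜ[ℝ] yv i)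
        ∈ auxW A := by
      rw [← Finset.sum_sub_distrib]
      apply Submodule.sum_mem
      intro i _
      rw [← TensorProduct.sub_tmul]
      have heq : a * (w * x i) - w * (a * x i) = (a * w - w * a) * x i := by noncomm_ring
      rw [heq]
      apply Submodule.mem_sup_left
      exact ⟨(⟨_, aux_jacobson_mul_right (hwcen a) (x i)⟩ :
        Submodule.restrictScalars ℝ (jacobson (⊥ : Ideal A))) ⊗ₜ[ℝ] yv i, by
          rw [TensorProduct.map_tmul]; rfl⟩
    have hfin : (∑ i, (a * (w * x i)) ⊗ₜ[ℝ] yv i) - ∑ i, (w * x i) ⊗ₜ[ℝ] (yv i * a)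
        = ((∑ i, (a * (w * x i)) ⊗ₜ[ℝ] yv i) - (∑ i, (w * (a * x i)) ⊗ₜ[ℝ] yv i))
          + ((∑ i, (w * (a * x i)) ⊗ₜ[ℝ] yv i) - ∑ i, (w * x i) ⊗ₜ[ℝ] (yv i * a)) := by
      abel
    rw [hfin]
    exact add_mem hext hstab


end Key


/-- Let `φ : A → B` be a unital homomorphism of (real) Banach algebras
with `A` finite-dimensional, realized as a continuous linear map `φ : A →L[ℝ] B`
which is unital and multiplicative.  If `φ` annihilates the Jacobson radical of
`A`, then its orbit under conjugation by the group `B^×` of invertible elements is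
closed in the space of unital Banach-algebra homomorphisms `A → B` (a subspace of
`A →L[ℝ] B` with the operator-norm topology). -/
theorem orbit_closed_of_kills_radical
    {A B : Type*} [NormedRing A] [NormedAlgebra ℝ A] [FiniteDimensional ℝ A]
    [NormedRing B] [NormedAlgebra ℝ B] [CompleteSpace B]
    (φ : A →L[ℝ] B) (hφ1 : φ 1 = 1) (hφm : ∀ a a' : A, φ (a * a') = φ a * φ a')
    (hrad : ∀ a : A, a ∈ Ideal.jacobson (⊥ : Ideal A) → φ a = 0) :
    IsClosed {ψ : {T : A →L[ℝ] B // T 1 = 1 ∧ ∀ a a' : A, T (a * a') = T a * T a'} |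
      ∃ u : Bˣ, ∀ a : A, (ψ : A →L[ℝ] B) a = (u : B) * φ a * (↑u⁻¹ : B)} := by
  apply isClosed_of_closure_subset
  intro ψ hψ
  -- members of the orbit kill the radical, hence so do closure points
  have horbit_kill : ∀ (χ : {T : A →L[ℝ] B // T 1 = 1 ∧ ∀ a a' : A, T (a * a') = T a * T a'}),
      (∃ u : Bˣ, ∀ a : A, (χ : A →L[ℝ] B) a = (u : B) * φ a * (↑u⁻¹ : B)) →
      ∀ a ∈ jacobson (⊥ : Ideal A), (χ : A →L[ℝ] B) a = 0 := by
    rintro χ ⟨u, hu⟩ a ha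
    rw [hu a, hrad a ha, mul_zero, zero_mul]
  have hkill : ∀ a ∈ jacobson (⊥ : Ideal A), (ψ : A →L[ℝ] B) a = 0 := by
    intro a ha
    have hC : IsClosed {χ : {T : A →L[ℝ] B // T 1 = 1 ∧ ∀ a a' : A, T (a * a') = T a * T a'} |
        (χ : A →L[ℝ] B) a = 0} := by
      have hcont : Continuous fun χ : {T : A →L[ℝ] B // T 1 = 1 ∧
          ∀ a a' : A, T (a * a') = T a * T a'} => (χ : A →L[ℝ] B) a :=
        (ContinuousLinearMap.apply ℝ B a).continuous.comp continuous_subtype_val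
      exact isClosed_eq hcont continuous_const
    exact closure_minimal (fun χ hχ => horbit_kill χ hχ a ha) hC hψ
  obtain ⟨n, x, y, hxy1, hxy2⟩ := aux_key (A := A)
  set M : ℝ := ∑ i, ‖(ψ : A →L[ℝ] B) (x i)‖ * ‖y i‖ with hM
  have hM0 : 0 ≤ M := Finset.sum_nonneg fun i _ => mul_nonneg (norm_nonneg _) (norm_nonneg _)
  have hMpos : (0 : ℝ) < M + 1 := by linarith
  obtain ⟨χ, hχO, hdist⟩ := Metric.mem_closure_iff.mp hψ ((M + 1)⁻¹) (by positivity)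
  obtain ⟨uχ, huχ⟩ := hχO
  have hχkill : ∀ a ∈ jacobson (⊥ : Ideal A), (χ : A →L[ℝ] B) a = 0 :=
    horbit_kill χ ⟨uχ, huχ⟩
  set u₀ : B := ∑ i, (ψ : A →L[ℝ] B) (x i) * (χ : A →L[ℝ] B) (y i) with hu₀
  -- the intertwining identity
  have hint : ∀ a : A, (ψ : A →L[ℝ] B) a * u₀ = u₀ * (χ : A →L[ℝ] B) a := by
    intro a
    set f : A →ₗ[ℝ] A →ₗ[ℝ] B := (LinearMap.mul ℝ B).compl₁₂
      ((ψ : A →L[ℝ] B) : A →ₗ[ℝ] B) ((χ : A →L[ℝ] B) : A →ₗ[ℝ] B) with hf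
    have hfapp : ∀ p q : A, f p q = (ψ : A →L[ℝ] B) p * (χ : A →L[ℝ] B) q := fun p q => rfl
    have h0 : TensorProduct.lift f ((∑ i, (a * x i) ⊗ₜ[ℝ] y i) - ∑ i, x i ⊗ₜ[ℝ] (y i * a))
        ∈ (⊥ : Submodule ℝ B) := by
      apply aux_lift_mem f ⊥ ?_ ?_ (hxy2 a)
      · intro j hj b
        rw [Submodule.mem_bot, hfapp, hkill j hj, zero_mul]
      · intro j hj b
        rw [Submodule.mem_bot, hfapp, hχkill j hj, mul_zero]
    rw [Submodule.mem_bot, _root_.map_sub, _root_.map_sum, _root_.map_sum] at h0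
    have hl : (∑ i, TensorProduct.lift f ((a * x i) ⊗ₜ[ℝ] y i)) = (ψ : A →L[ℝ] B) a * u₀ := by
      rw [hu₀, Finset.mul_sum]
      apply Finset.sum_congr rfl
      intro i _
      rw [TensorProduct.lift.tmul, hfapp, ψ.2.2 a (x i), mul_assoc]
    have hr : (∑ i, TensorProduct.lift f (x i ⊗ₜ[ℝ] (y i * a))) = u₀ * (χ : A →L[ℝ] B) a := by
      rw [hu₀, Finset.sum_mul]
      apply Finset.sum_congr rfl
      intro i _
      rw [TensorProduct.lift.tmul, hfapp, χ.2.2 (y i) a, mul_assoc]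
    rw [hl, hr, sub_eq_zero] at h0
    exact h0
  -- u₀ is close to 1
  have hone : (∑ i, (ψ : A →L[ℝ] B) (x i) * (ψ : A →L[ℝ] B) (y i)) = 1 := by
    have h1 : ∀ i : Fin n, (ψ : A →L[ℝ] B) (x i) * (ψ : A →L[ℝ] B) (y i)
        = (ψ : A →L[ℝ] B) (x i * y i) := fun i => (ψ.2.2 _ _).symm
    rw [Finset.sum_congr rfl fun i _ => h1 i, ← _root_.map_sum]
    have hsplit : (∑ i, x i * y i) = 1 + ((∑ i, x i * y i) - 1) := by abel
    rw [hsplit, _root_.map_add, ψ.2.1, hkill _ hxy1, add_zero]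
  have hnorm : ‖u₀ - 1‖ < 1 := by
    have hu1 : u₀ - 1 = ∑ i, (ψ : A →L[ℝ] B) (x i)
        * (((χ : A →L[ℝ] B) - (ψ : A →L[ℝ] B)) (y i)) := by
      calc u₀ - 1 = (∑ i, (ψ : A →L[ℝ] B) (x i) * (χ : A →L[ℝ] B) (y i))
            - (∑ i, (ψ : A →L[ℝ] B) (x i) * (ψ : A →L[ℝ] B) (y i)) := by rw [hu₀, hone]
      _ = ∑ i, ((ψ : A →L[ℝ] B) (x i) * (χ : A →L[ℝ] B) (y i)
            - (ψ : A →L[ℝ] B) (x i) * (ψ : A →L[ℝ] B) (y i)) := by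
          rw [Finset.sum_sub_distrib]
      _ = ∑ i, (ψ : A →L[ℝ] B) (x i)
            * (((χ : A →L[ℝ] B) - (ψ : A →L[ℝ] B)) (y i)) := by
          apply Finset.sum_congr rfl
          intro i _
          rw [ContinuousLinearMap.sub_apply, mul_sub]
    set r : ℝ := ‖(χ : A →L[ℝ] B) - (ψ : A →L[ℝ] B)‖ with hrr
    have hrlt : r < (M + 1)⁻¹ := by
      rw [hrr, ← dist_eq_norm, ← Subtype.dist_eq, dist_comm]
      exact hdist
    have hr0 : (0 : ℝ) ≤ r := norm_nonneg _
    have hbound : ‖u₀ - 1‖ ≤ r * M := by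
      rw [hu1]
      refine le_trans (norm_sum_le _ _) ?_
      rw [hM, Finset.mul_sum]
      apply Finset.sum_le_sum
      intro i _
      refine le_trans (norm_mul_le _ _) ?_
      have h2 : ‖((χ : A →L[ℝ] B) - (ψ : A →L[ℝ] B)) (y i)‖ ≤ r * ‖y i‖ :=
        ContinuousLinearMap.le_opNorm _ _
      calc ‖(ψ : A →L[ℝ] B) (x i)‖ * ‖((χ : A →L[ℝ] B) - (ψ : A →L[ℝ] B)) (y i)‖
          ≤ ‖(ψ : A →L[ℝ] B) (x i)‖ * (r * ‖y i‖) := by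
            exact mul_le_mul_of_nonneg_left h2 (norm_nonneg _)
      _ = r * (‖(ψ : A →L[ℝ] B) (x i)‖ * ‖y i‖) := by ring
    have : r * M < 1 := by
      have h3 : r * (M + 1) < (M + 1)⁻¹ * (M + 1) := by
        exact mul_lt_mul_of_pos_right hrlt hMpos
      rw [inv_mul_cancel₀ (ne_of_gt hMpos)] at h3
      nlinarith
    linarith [hbound]
  have hlt : ‖(1 : B) - u₀‖ < 1 := by rwa [norm_sub_rev]
  set v : Bˣ := Units.oneSub (1 - u₀) hlt with hvdef
  have hv : (v : B) = u₀ := by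
    show (1 : B) - (1 - u₀) = u₀
    abel
  refine ⟨v * uχ, ?_⟩
  intro a
  have h5 : (ψ : A →L[ℝ] B) a = u₀ * ((χ : A →L[ℝ] B) a) * ↑v⁻¹ := by
    calc (ψ : A →L[ℝ] B) a = (ψ : A →L[ℝ] B) a * (u₀ * ↑v⁻¹) := by
          rw [← hv, Units.mul_inv, mul_one]
    _ = ((ψ : A →L[ℝ] B) a * u₀) * ↑v⁻¹ := by rw [mul_assoc]
    _ = u₀ * ((χ : A →L[ℝ] B) a) * ↑v⁻¹ := by rw [hint a]
  rw [h5, huχ a, ← hv, mul_inv_rev]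
  simp only [Units.val_mul, mul_assoc]
end

section
/- Let A and B be unital Banach algebras with A finite-dimensional semisimple, and φ: A → B a unital algebra homomorphism, making B an A-bimodule via a·b·a' := φ(a)bφ(a'). Then a bounded linear map f: A → B is tangent at φ to the set of unital algebra homomorphisms A → B if and only if f is a Hochschild 1-cocycle: f(aa') = φ(a)f(a') + f(a)φ(a') for all a, a' ∈ A (and f(1)=0). In particular, if φ_t is a differentiable path of unital algebra homomorphisms with φ₀ = φ, then d/dt|₀ φ_t ∈ Z¹(A,B). -/
set_option linter.unusedSectionVars false
set_option maxHeartbeats 1000000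

open LinearMap Module Filter Topology

section AlgebraicCore

variable {A : Type*} [Ring A] [Algebra ℝ A] [FiniteDimensional ℝ A]

/-- The trace form `(a, b) ↦ tr (L_{ab})` of a finite-dimensional algebra. -/
noncomputable def traceFormL (A : Type*) [Ring A] [Algebra ℝ A] :
    LinearMap.BilinForm ℝ A :=
  (LinearMap.mul ℝ A).compr₂ ((LinearMap.trace ℝ A).comp (LinearMap.mul ℝ A))

lemma traceFormL_apply (a b : A) :
    traceFormL A a b = LinearMap.trace ℝ A (LinearMap.mulLeft ℝ (a * b)) := rfl

lemma traceFormL_symm (a b : A) : traceFormL A a b = traceFormL A b a := by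
  simp only [traceFormL_apply]
  rw [LinearMap.mulLeft_mul, LinearMap.mulLeft_mul,
    ← Module.End.mul_eq_comp, ← Module.End.mul_eq_comp, LinearMap.trace_mul_comm]

lemma traceFormL_assoc (a b c : A) :
    traceFormL A (a * b) c = traceFormL A a (b * c) := by
  simp only [traceFormL_apply, mul_assoc]

lemma traceFormL_nondegenerate [IsSemisimpleRing A] :
    (traceFormL A).Nondegenerate := by
  suffices hL : LinearMap.SeparatingLeft (traceFormL A) from
    ⟨hL, fun a ha => hL a fun b => by rw [traceFormL_symm]; exact ha b⟩
  intro a ha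
  -- the radical of the trace form is a left ideal
  set N : Ideal A :=
    { carrier := {x : A | ∀ b : A, traceFormL A x b = 0}
      add_mem' := fun {x y} hx hy b => by
        rw [map_add, LinearMap.add_apply, hx b, hy b, add_zero]
      zero_mem' := fun b => by simp
      smul_mem' := fun r {x} hx b => by
        show traceFormL A (r * x) b = 0
        rw [traceFormL_assoc, traceFormL_symm, traceFormL_assoc]
        exact hx _ } with hN
  obtain ⟨e, he, hNe⟩ := IsSemisimpleRing.ideal_eq_span_idempotent N
  have heN : e ∈ N := by rw [hNe]; exact Ideal.mem_span_singleton_self e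
  -- `L_e` is a projection with zero trace, hence zero
  have htr : LinearMap.trace ℝ A (LinearMap.mulLeft ℝ e) = 0 := by
    have := heN (1 : A)
    rwa [traceFormL_apply, mul_one] at this
  have hproj : LinearMap.IsProj (LinearMap.range (LinearMap.mulLeft ℝ e))
      (LinearMap.mulLeft ℝ e) := by
    refine ⟨fun x => LinearMap.mem_range_self _ x, ?_⟩
    rintro x ⟨y, rfl⟩
    show e * (e * y) = e * y
    rw [← mul_assoc, he]
  have h0 : (finrank ℝ (LinearMap.range (LinearMap.mulLeft ℝ e)) : ℝ) = 0 := by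
    rw [← hproj.trace, htr]
  have hrange : LinearMap.range (LinearMap.mulLeft ℝ e) = ⊥ := by
    have hfr : finrank ℝ (LinearMap.range (LinearMap.mulLeft ℝ e)) = 0 := by
      exact_mod_cast h0
    exact Submodule.finrank_eq_zero.mp hfr
  have he0 : e = 0 := by
    have : e * 1 ∈ LinearMap.range (LinearMap.mulLeft ℝ e) :=
      LinearMap.mem_range_self _ 1
    rw [hrange] at this
    simpa using this
  have haN : a ∈ N := ha
  rw [hNe, he0] at haN
  have : (Ideal.span {(0 : A)} : Ideal A) = ⊥ := by simp
  rw [this] at haN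
  simpa using haN

variable (A) [IsSemisimpleRing A]

lemma traceFormL_isSymm : (traceFormL A).IsSymm := ⟨fun x y => traceFormL_symm x y⟩

/-- A basis of the semisimple algebra. -/
noncomputable def sbX : Basis (Fin (finrank ℝ A)) ℝ A := Module.finBasis ℝ A

/-- The trace-form dual basis. -/
noncomputable def sbY : Basis (Fin (finrank ℝ A)) ℝ A :=
  (traceFormL A).dualBasis traceFormL_nondegenerate (sbX A)

lemma sbX_eq_dual : sbX A = (traceFormL A).dualBasis traceFormL_nondegenerate (sbY A) := by
  rw [sbY, LinearMap.BilinForm.dualBasis_dualBasis _ (traceFormL_isSymm A)]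

lemma sbY_repr (v : A) (i : Fin (finrank ℝ A)) :
    (sbY A).repr v i = traceFormL A v (sbX A i) := by
  rw [sbY, LinearMap.BilinForm.dualBasis_repr_apply]

lemma sbX_repr (v : A) (i : Fin (finrank ℝ A)) :
    (sbX A).repr v i = traceFormL A v (sbY A i) := by
  conv_lhs => rw [sbX_eq_dual]
  rw [LinearMap.BilinForm.dualBasis_repr_apply]

/-- Expansion in the `x`-basis with trace-form coefficients. -/
lemma expand_X (v : A) : v = ∑ i, traceFormL A v (sbY A i) • sbX A i := by
  conv_lhs => rw [← (sbX A).sum_repr v]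
  exact Finset.sum_congr rfl fun i _ => by rw [sbX_repr]

/-- Expansion in the `y`-basis with trace-form coefficients. -/
lemma expand_Y (v : A) : v = ∑ i, traceFormL A v (sbX A i) • sbY A i := by
  conv_lhs => rw [← (sbY A).sum_repr v]
  exact Finset.sum_congr rfl fun i _ => by rw [sbY_repr]

/-- The fundamental "Casimir invariance": for any bilinear map `F`,
`∑ F (a xᵢ) yᵢ = ∑ F xᵢ (yᵢ a)`. -/
lemma casimir_invariance {M : Type*} [AddCommGroup M] [Module ℝ M]
    (F : A →ₗ[ℝ] A →ₗ[ℝ] M) (a : A) :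
    ∑ i, F (a * sbX A i) (sbY A i) = ∑ i, F (sbX A i) (sbY A i * a) := by
  have key : ∀ i j, traceFormL A (a * sbX A i) (sbY A j)
      = traceFormL A (sbY A j * a) (sbX A i) := by
    intro i j
    rw [traceFormL_symm, traceFormL_assoc]
  calc ∑ i, F (a * sbX A i) (sbY A i)
      = ∑ i, ∑ j, traceFormL A (a * sbX A i) (sbY A j) • F (sbX A j) (sbY A i) := by
        refine Finset.sum_congr rfl fun i _ => ?_
        conv_lhs => rw [expand_X A (a * sbX A i)]
        simp [map_sum, LinearMap.sum_apply, LinearMap.map_smul, LinearMap.smul_apply]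
    _ = ∑ i, ∑ j, traceFormL A (sbY A j * a) (sbX A i) • F (sbX A j) (sbY A i) := by
        exact Finset.sum_congr rfl fun i _ => Finset.sum_congr rfl fun j _ => by rw [key]
    _ = ∑ j, ∑ i, traceFormL A (sbY A j * a) (sbX A i) • F (sbX A j) (sbY A i) :=
        Finset.sum_comm
    _ = ∑ i, F (sbX A i) (sbY A i * a) := by
        refine Finset.sum_congr rfl fun j _ => ?_
        conv_rhs => rw [expand_Y A (sbY A j * a)]
        simp [map_sum, LinearMap.map_smul]

/-- The Casimir element (the image of the separability idempotent under
multiplication) is `1`. -/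
lemma casimir_eq_one : ∑ i, sbX A i * sbY A i = (1 : A) := by
  have key : ∀ w : A, traceFormL A (∑ i, sbX A i * sbY A i) w = traceFormL A 1 w := by
    intro w
    have h1 : traceFormL A (∑ i, sbX A i * sbY A i) w
        = ∑ i, traceFormL A (sbX A i) (sbY A i * w) := by
      rw [map_sum]
      simp only [LinearMap.sum_apply]
      exact Finset.sum_congr rfl fun i _ => traceFormL_assoc _ _ _
    have h2 := (casimir_invariance A (traceFormL A) w).symm
    rw [h1, h2]
    have h3 : ∀ i, traceFormL A (w * sbX A i) (sbY A i)
        = (sbX A).repr ((LinearMap.mulLeft ℝ w) (sbX A i)) i := by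
      intro i; rw [sbX_repr]; rfl
    rw [Finset.sum_congr rfl fun i _ => h3 i]
    rw [show traceFormL A 1 w = LinearMap.trace ℝ A (LinearMap.mulLeft ℝ w) by
      rw [traceFormL_apply, one_mul]]
    rw [LinearMap.trace_eq_matrix_trace ℝ (sbX A), Matrix.trace]
    simp [Matrix.diag, LinearMap.toMatrix_apply]
  have h0 : ∀ w, traceFormL A ((∑ i, sbX A i * sbY A i) - 1) w = 0 := by
    intro w
    rw [map_sub, LinearMap.sub_apply, key, sub_self]
  exact sub_eq_zero.mp (traceFormL_nondegenerate.1 _ h0)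

end AlgebraicCore

section Inner

variable {A B : Type*} [NormedRing A] [NormedAlgebra ℝ A] [FiniteDimensional ℝ A]
  [IsSemisimpleRing A] [NormedRing B] [NormedAlgebra ℝ B]

/-- Every continuous Hochschild 1-cocycle on a finite-dimensional semisimple algebra
is an inner derivation. -/
lemma cocycle_is_inner (φ f : A →L[ℝ] B)
    (hφ1 : φ 1 = 1) (hφm : ∀ a a' : A, φ (a * a') = φ a * φ a')
    (hf : ∀ a a' : A, f (a * a') = φ a * f a' + f a * φ a') (a : A) :
    f a = φ a * (∑ i, φ (sbX A i) * f (sbY A i))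
        - (∑ i, φ (sbX A i) * f (sbY A i)) * φ a := by
  set b0 : B := ∑ i, φ (sbX A i) * f (sbY A i) with hb0
  let F : A →ₗ[ℝ] A →ₗ[ℝ] B := LinearMap.mk₂ ℝ (fun u v => φ u * f v)
    (fun u u' v => by simp [add_mul])
    (fun c u v => by simp [smul_mul_assoc])
    (fun u v v' => by simp [mul_add])
    (fun c u v => by simp [mul_smul_comm])
  have hFapp : ∀ u v, F u v = φ u * f v := fun u v => rfl
  have h1 : φ a * b0 = f a + b0 * φ a := by
    calc φ a * b0 = ∑ i, F (a * sbX A i) (sbY A i) := by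
          rw [hb0, Finset.mul_sum]
          exact Finset.sum_congr rfl fun i _ => by
            rw [hFapp, hφm, mul_assoc]
      _ = ∑ i, F (sbX A i) (sbY A i * a) := casimir_invariance A F a
      _ = ∑ i, (φ (sbX A i * sbY A i) * f a + (φ (sbX A i) * f (sbY A i)) * φ a) := by
          refine Finset.sum_congr rfl fun i _ => ?_
          rw [hFapp, hf, mul_add, ← mul_assoc, ← hφm, ← mul_assoc]
      _ = f a + b0 * φ a := by
          rw [Finset.sum_add_distrib, ← Finset.sum_mul, ← Finset.sum_mul,
            ← map_sum, casimir_eq_one, hφ1, one_mul, hb0]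
  rw [h1, add_sub_cancel_right]

end Inner

section Curve

/-- A point of `s` which is the value at `0` of a curve inside `s` differentiable
at `0` has the derivative of the curve in its tangent cone. -/
lemma mem_tangentConeAt_of_curve {E : Type*} [NormedAddCommGroup E] [NormedSpace ℝ E]
    {s : Set E} {γ : ℝ → E} {f : E} (hs : ∀ t, γ t ∈ s) (hγ : HasDerivAt γ f 0) :
    f ∈ tangentConeAt ℝ s (γ 0) := by
  rw [mem_tangentConeAt_iff_exists_seq_norm_tendsto_atTop]
  refine ⟨fun n => (n : ℝ) + 1, fun n => γ (((n : ℝ) + 1)⁻¹) - γ 0, ?_, ?_, ?_⟩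
  pick_goal 2
  · filter_upwards with n
    simpa using hs (((n : ℝ) + 1)⁻¹)
  · have hc : Tendsto (fun n : ℕ => (n : ℝ) + 1) atTop atTop :=
      tendsto_atTop_add_const_right atTop 1 tendsto_natCast_atTop_atTop
    refine hc.congr fun n => ?_
    rw [Real.norm_of_nonneg (by positivity)]
  · have hslope : Tendsto (slope γ 0) (𝓝[≠] 0) (𝓝 f) :=
      hasDerivAt_iff_tendsto_slope.mp hγ
    have ht0 : Tendsto (fun n : ℕ => ((n : ℝ) + 1)⁻¹) atTop (𝓝[≠] (0:ℝ)) := by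
      rw [tendsto_nhdsWithin_iff]
      constructor
      · exact (tendsto_atTop_add_const_right atTop 1
          tendsto_natCast_atTop_atTop).inv_tendsto_atTop
      · filter_upwards with n
        simp only [Set.mem_compl_iff, Set.mem_singleton_iff]
        positivity
    have := hslope.comp ht0
    refine this.congr fun n => ?_
    rw [Function.comp_apply, slope_def_module, sub_zero, inv_inv]

end Curve

theorem tangent_space_is_hochschild_cocycles'
    {A B : Type*} [NormedRing A] [NormedAlgebra ℝ A] [FiniteDimensional ℝ A]
    [IsSemisimpleRing A] [NormedRing B] [NormedAlgebra ℝ B] [CompleteSpace B]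
    (φ : A →L[ℝ] B) (hφ1 : φ 1 = 1) (hφm : ∀ a a' : A, φ (a * a') = φ a * φ a') :
    (∀ f : A →L[ℝ] B,
      f ∈ tangentConeAt ℝ
          {T : A →L[ℝ] B | T 1 = 1 ∧ ∀ a a' : A, T (a * a') = T a * T a'} φ ↔
        (f 1 = 0 ∧ ∀ a a' : A, f (a * a') = φ a * f a' + f a * φ a')) ∧
    (∀ (φt : ℝ → (A →L[ℝ] B)) (f : A →L[ℝ] B),
      (∀ t : ℝ, (φt t) 1 = 1 ∧ ∀ a a' : A, (φt t) (a * a') = (φt t) a * (φt t) a') →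
      φt 0 = φ → HasDerivAt φt f 0 →
        f 1 = 0 ∧ ∀ a a' : A, f (a * a') = φ a * f a' + f a * φ a') := by
  set s : Set (A →L[ℝ] B) :=
    {T : A →L[ℝ] B | T 1 = 1 ∧ ∀ a a' : A, T (a * a') = T a * T a'} with hs_def
  -- evaluation is continuous
  have hEv : ∀ (x : A) {L : ℕ → A →L[ℝ] B} {l : A →L[ℝ] B},
      Tendsto L atTop (𝓝 l) → Tendsto (fun n => L n x) atTop (𝓝 (l x)) := by
    intro x L l hL
    exact ((ContinuousLinearMap.apply ℝ B x).continuous.tendsto l).comp hL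
  -- Easy direction: tangent vectors are cocycles
  have easy : ∀ f : A →L[ℝ] B, f ∈ tangentConeAt ℝ s φ →
      f 1 = 0 ∧ ∀ a a' : A, f (a * a') = φ a * f a' + f a * φ a' := by
    rintro f hf
    obtain ⟨c, d, hnorm, hmem, hlim⟩ := mem_tangentConeAt_iff_exists_seq_norm_tendsto_atTop.mp hf
    have hc0 : Tendsto (fun n => (c n)⁻¹) atTop (𝓝 (0:ℝ)) := by
      rw [tendsto_zero_iff_norm_tendsto_zero]
      exact hnorm.inv_tendsto_atTop.congr fun n => (norm_inv (c n)).symm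
    have hne : ∀ᶠ n in atTop, c n ≠ 0 := by
      filter_upwards [hnorm.eventually_ge_atTop 1] with n hn
      intro h
      rw [h] at hn
      norm_num at hn
    have hd0 : Tendsto d atTop (𝓝 0) := by
      have h := hc0.smul hlim
      have hz : ((0:ℝ) • f : A →L[ℝ] B) = 0 := by ext x; simp
      rw [hz] at h
      refine h.congr' ?_
      filter_upwards [hne] with n hn
      rw [smul_smul, inv_mul_cancel₀ hn, one_smul]
    constructor
    · have h1 : Tendsto (fun n => (c n • d n) (1:A)) atTop (𝓝 (f 1)) := hEv 1 hlim
      have h2 : (fun n => (c n • d n) (1:A)) =ᶠ[atTop] (fun _ => (0:B)) := by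
        filter_upwards [hmem] with n hn
        have h1' : (φ + d n) 1 = 1 := hn.1
        rw [ContinuousLinearMap.add_apply, hφ1, add_eq_left] at h1'
        simp [ContinuousLinearMap.smul_apply, h1']
      exact tendsto_nhds_unique (h1.congr' h2) tendsto_const_nhds
    · intro a a'
      have hL : Tendsto (fun n => (c n • d n) (a * a')) atTop (𝓝 (f (a * a'))) :=
        hEv _ hlim
      have hda' : Tendsto (fun n => d n a') atTop (𝓝 (0:B)) := by
        simpa using hEv a' hd0
      have hR : Tendsto (fun n => φ a * ((c n • d n) a') + ((c n • d n) a) * φ a'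
          + ((c n • d n) a) * (d n a')) atTop
          (𝓝 (φ a * f a' + f a * φ a' + f a * 0)) := by
        exact ((tendsto_const_nhds.mul (hEv a' hlim)).add
          ((hEv a hlim).mul tendsto_const_nhds)).add ((hEv a hlim).mul hda')
      have heq : (fun n => (c n • d n) (a * a')) =ᶠ[atTop]
          (fun n => φ a * ((c n • d n) a') + ((c n • d n) a) * φ a'
            + ((c n • d n) a) * (d n a')) := by
        filter_upwards [hmem] with n hn
        have h := hn.2 a a'
        simp only [ContinuousLinearMap.add_apply] at h
        rw [hφm] at h
        have hdm : d n (a * a') = φ a * d n a' + d n a * φ a' + d n a * d n a' := by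
          have hexp : (φ a + d n a) * (φ a' + d n a') =
              φ a * φ a' + (φ a * d n a' + d n a * φ a' + d n a * d n a') := by
            rw [add_mul, mul_add, mul_add]
            abel
          rw [hexp] at h
          exact add_left_cancel h
        simp only [ContinuousLinearMap.smul_apply, hdm, smul_add, mul_smul_comm,
          smul_mul_assoc]
      have := tendsto_nhds_unique hL (hR.congr' heq.symm)
      rw [mul_zero, add_zero] at this
      exact this
  refine ⟨fun f => ⟨easy f, ?_⟩, fun φt f hmem h0 hd => by
    refine easy f ?_
    rw [← h0]
    exact mem_tangentConeAt_of_curve (fun t => hmem t) hd⟩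
  -- Hard direction: every cocycle is tangent
  rintro ⟨hf1, hfm⟩
  set b0 : B := ∑ i, φ (sbX A i) * f (sbY A i) with hb0
  have hinner : ∀ a, f a = φ a * b0 - b0 * φ a :=
    cocycle_is_inner φ f hφ1 hφm hfm
  -- the conjugation path
  set Ψ : (B →L[ℝ] B) →L[ℝ] (A →L[ℝ] B) := (ContinuousLinearMap.compL ℝ A B B).flip φ
    with hΨ
  set γ : ℝ → (A →L[ℝ] B) := fun t =>
    Ψ ((ContinuousLinearMap.mulLeftRight ℝ B (NormedSpace.exp (t • (-b0))))
      (NormedSpace.exp (t • b0))) with hγ_def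
  have hγa : ∀ t a, γ t a =
      NormedSpace.exp (t • (-b0)) * φ a * NormedSpace.exp (t • b0) := by
    intro t a
    simp [hγ_def, hΨ, ContinuousLinearMap.flip_apply, ContinuousLinearMap.compL_apply,
      ContinuousLinearMap.comp_apply, ContinuousLinearMap.mulLeftRight_apply]
  have hcomm : ∀ t : ℝ, Commute (t • (-b0)) (t • b0) :=
    fun t => (((Commute.refl b0).neg_left).smul_left t).smul_right t
  have hmul1 : ∀ t : ℝ, NormedSpace.exp (t • (-b0)) * NormedSpace.exp (t • b0) = 1 := by
    intro t
    letI : NormedAlgebra ℚ B := .restrictScalars ℚ ℝ B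
    rw [← NormedSpace.exp_add_of_commute (hcomm t), smul_neg, neg_add_cancel,
      NormedSpace.exp_zero]
  have hmul2 : ∀ t : ℝ, NormedSpace.exp (t • b0) * NormedSpace.exp (t • (-b0)) = 1 := by
    intro t
    letI : NormedAlgebra ℚ B := .restrictScalars ℚ ℝ B
    rw [← NormedSpace.exp_add_of_commute (hcomm t).symm, smul_neg, add_neg_cancel,
      NormedSpace.exp_zero]
  have hγs : ∀ t, γ t ∈ s := by
    intro t
    constructor
    · rw [hγa, hφ1, mul_one, hmul1]
    · intro a a'
      rw [hγa, hγa, hγa, hφm]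
      have hz : ∀ z : B, NormedSpace.exp (t • b0) *
          (NormedSpace.exp (t • (-b0)) * z) = z := fun z => by
        rw [← mul_assoc, hmul2, one_mul]
      simp only [mul_assoc]
      rw [hz]
  have hγ0 : γ 0 = φ := by
    ext a
    simp [hγa, NormedSpace.exp_zero]
  -- derivative of the path at 0
  have hdplus : HasDerivAt (fun t : ℝ => NormedSpace.exp (t • b0)) b0 0 := by
    simpa using hasDerivAt_exp_smul_const b0 (0:ℝ)
  have hdminus : HasDerivAt (fun t : ℝ => NormedSpace.exp (t • (-b0))) (-b0) 0 := by
    simpa using hasDerivAt_exp_smul_const (-b0) (0:ℝ)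
  have hdc : HasDerivAt (fun t : ℝ =>
      ContinuousLinearMap.mulLeftRight ℝ B (NormedSpace.exp (t • (-b0))))
      (ContinuousLinearMap.mulLeftRight ℝ B (-b0)) 0 := by
    have hl : HasFDerivAt (ContinuousLinearMap.mulLeftRight ℝ B)
        (ContinuousLinearMap.mulLeftRight ℝ B) (NormedSpace.exp ((0:ℝ) • (-b0))) :=
      ContinuousLinearMap.hasFDerivAt _
    have hd := @HasFDerivAt.comp_hasDerivAt ℝ _ B _ _ (B →L[ℝ] B →L[ℝ] B) _ _
      (fun t : ℝ => NormedSpace.exp (t • (-b0))) (-b0) 0 _ (ContinuousLinearMap.mulLeftRight ℝ B)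
      hl hdminus
    exact hd
  have happ : HasDerivAt (fun t : ℝ =>
      (ContinuousLinearMap.mulLeftRight ℝ B (NormedSpace.exp (t • (-b0))))
        (NormedSpace.exp (t • b0)))
      ((ContinuousLinearMap.mulLeftRight ℝ B (-b0)) (NormedSpace.exp ((0:ℝ) • b0))
        + (ContinuousLinearMap.mulLeftRight ℝ B (NormedSpace.exp ((0:ℝ) • (-b0)))) b0)
      0 := hdc.clm_apply hdplus
  have hγd : HasDerivAt γ f 0 := by
    have hcomp := (hasDerivAt_const (0:ℝ) Ψ).clm_apply happ
    have h : HasDerivAt γ (Ψ ((ContinuousLinearMap.mulLeftRight ℝ B (-b0))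
          (NormedSpace.exp ((0:ℝ) • b0))
        + (ContinuousLinearMap.mulLeftRight ℝ B (NormedSpace.exp ((0:ℝ) • (-b0)))) b0))
        0 := by
      simpa [Function.comp, hγ_def] using hcomp
    have heq : Ψ ((ContinuousLinearMap.mulLeftRight ℝ B (-b0))
          (NormedSpace.exp ((0:ℝ) • b0))
        + (ContinuousLinearMap.mulLeftRight ℝ B (NormedSpace.exp ((0:ℝ) • (-b0)))) b0)
        = f := by
      ext a
      simp only [zero_smul, NormedSpace.exp_zero, hΨ, map_add,
        ContinuousLinearMap.flip_apply, ContinuousLinearMap.compL_apply,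
        ContinuousLinearMap.add_apply, ContinuousLinearMap.comp_apply,
        ContinuousLinearMap.mulLeftRight_apply]
      rw [hinner a]
      noncomm_ring
    rw [heq] at h
    exact h
  have := mem_tangentConeAt_of_curve hγs hγd
  rwa [hγ0] at this


/-- Let `A`, `B` be unital (real) Banach algebras with `A`
finite-dimensional and semisimple, and `φ : A → B` a unital algebra homomorphism
(a continuous linear map which is unital and multiplicative).  A bounded linear map
`f : A → B` is tangent at `φ` to the set of unital algebra homomorphisms `A → B`
iff `f` is a Hochschild 1-cocycle for the `φ`-induced bimodule structure:
`f(aa') = φ(a)f(a') + f(a)φ(a')` (and `f(1) = 0`).  In particular the derivative at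
`0` of a differentiable path of unital homomorphisms through `φ` is a 1-cocycle. -/
theorem tangent_space_is_hochschild_cocycles
    {A B : Type*} [NormedRing A] [NormedAlgebra ℝ A] [FiniteDimensional ℝ A]
    [IsSemisimpleRing A] [NormedRing B] [NormedAlgebra ℝ B] [CompleteSpace B]
    (φ : A →L[ℝ] B) (hφ1 : φ 1 = 1) (hφm : ∀ a a' : A, φ (a * a') = φ a * φ a') :
    (∀ f : A →L[ℝ] B,
      f ∈ tangentConeAt ℝ
          {T : A →L[ℝ] B | T 1 = 1 ∧ ∀ a a' : A, T (a * a') = T a * T a'} φ ↔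
        (f 1 = 0 ∧ ∀ a a' : A, f (a * a') = φ a * f a' + f a * φ a')) ∧
    (∀ (φt : ℝ → (A →L[ℝ] B)) (f : A →L[ℝ] B),
      (∀ t : ℝ, (φt t) 1 = 1 ∧ ∀ a a' : A, (φt t) (a * a') = (φt t) a * (φt t) a') →
      φt 0 = φ → HasDerivAt φt f 0 →
        f 1 = 0 ∧ ∀ a a' : A, f (a * a') = φ a * f a' + f a * φ a') := by
  exact tangent_space_is_hochschild_cocycles' φ hφ1 hφm
end
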